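/- arXiv:2604.11985 — 5 statements merged into one kernel-verified Lean document; each statement's English description precedes it below -/
import Mathlib

section
/- Let L > 0 and 0 < ℓ < ℓ₁ be real numbers. Let Q = {(x, y) ∈ ℝ² : 0 ≤ x ≤ L and 0 ≤ y ≤ ((ℓ₁ − ℓ)/L)·x + ℓ}, and define v : ℝ² → ℝ on Q by v(x, y) = ℓ·y / (((ℓ₁ − ℓ)/L)·x + ℓ). Then v is differentiable on Q and the Dirichlet integral ∫_Q [ (∂v/∂x)² + (∂v/∂y)² ] dx dy equals (ℓ²·L/(ℓ₁ − ℓ))·log(ℓ₁/ℓ) + (ℓ²·(ℓ₁ − ℓ)/(3L))·log(ℓ₁/ℓ). -/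
open MeasureTheory Set

/-- Let `L > 0` and `0 < ℓ < ℓ₁`. On the Euclidean trapezoid
`Q = {(x,y) : 0 ≤ x ≤ L, 0 ≤ y ≤ ((ℓ₁ - ℓ)/L) x + ℓ}`, the function
`v (x,y) = ℓ y / (((ℓ₁ - ℓ)/L) x + ℓ)` is differentiable, and its Dirichlet integral
`∫_Q ((∂v/∂x)² + (∂v/∂y)²)` equals
`(ℓ² L/(ℓ₁ - ℓ)) log (ℓ₁/ℓ) + (ℓ² (ℓ₁ - ℓ)/(3 L)) log (ℓ₁/ℓ)`. -/
theorem stmt_3 (L ℓ ℓ₁ : ℝ) (hL : 0 < L) (hℓ : 0 < ℓ) (hℓ₁ : ℓ < ℓ₁)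
    (Q : Set (ℝ × ℝ))
    (hQ : Q = {p : ℝ × ℝ | 0 ≤ p.1 ∧ p.1 ≤ L ∧ 0 ≤ p.2 ∧
      p.2 ≤ ((ℓ₁ - ℓ) / L) * p.1 + ℓ})
    (v : ℝ × ℝ → ℝ)
    (hv : v = fun p : ℝ × ℝ => ℓ * p.2 / (((ℓ₁ - ℓ) / L) * p.1 + ℓ)) :
    DifferentiableOn ℝ v Q ∧
    (∫ p in Q, ((deriv (fun x : ℝ => v (x, p.2)) p.1) ^ 2 +
        (deriv (fun y : ℝ => v (p.1, y)) p.2) ^ 2)) =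
      ℓ ^ 2 * L / (ℓ₁ - ℓ) * Real.log (ℓ₁ / ℓ) +
        ℓ ^ 2 * (ℓ₁ - ℓ) / (3 * L) * Real.log (ℓ₁ / ℓ) := by
  subst hQ hv
  set a : ℝ := (ℓ₁ - ℓ) / L with ha_def
  have ha : 0 < a := div_pos (by linarith) hL
  have haL : a * L + ℓ = ℓ₁ := by rw [ha_def]; field_simp; ring
  have hDpos : ∀ x : ℝ, 0 ≤ x → 0 < a * x + ℓ := fun x hx => by nlinarith
  -- closedness of Q
  have hQc : IsClosed {p : ℝ × ℝ | 0 ≤ p.1 ∧ p.1 ≤ L ∧ 0 ≤ p.2 ∧ p.2 ≤ a * p.1 + ℓ} := by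
    have h1 : IsClosed {p : ℝ × ℝ | 0 ≤ p.1} := isClosed_le continuous_const continuous_fst
    have h2 : IsClosed {p : ℝ × ℝ | p.1 ≤ L} := isClosed_le continuous_fst continuous_const
    have h3 : IsClosed {p : ℝ × ℝ | 0 ≤ p.2} := isClosed_le continuous_const continuous_snd
    have h4 : IsClosed {p : ℝ × ℝ | p.2 ≤ a * p.1 + ℓ} :=
      isClosed_le continuous_snd (by continuity)
    have : {p : ℝ × ℝ | 0 ≤ p.1 ∧ p.1 ≤ L ∧ 0 ≤ p.2 ∧ p.2 ≤ a * p.1 + ℓ}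
        = ({p : ℝ × ℝ | 0 ≤ p.1} ∩ {p : ℝ × ℝ | p.1 ≤ L}) ∩
          ({p : ℝ × ℝ | 0 ≤ p.2} ∩ {p : ℝ × ℝ | p.2 ≤ a * p.1 + ℓ}) := by
      ext p; simp [and_assoc]
    rw [this]
    exact ((h1.inter h2).inter (h3.inter h4))
  have hQm : MeasurableSet {p : ℝ × ℝ | 0 ≤ p.1 ∧ p.1 ≤ L ∧ 0 ≤ p.2 ∧ p.2 ≤ a * p.1 + ℓ} :=
    hQc.measurableSet
  have hQsub : {p : ℝ × ℝ | 0 ≤ p.1 ∧ p.1 ≤ L ∧ 0 ≤ p.2 ∧ p.2 ≤ a * p.1 + ℓ}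
      ⊆ Icc ((0 : ℝ), (0 : ℝ)) (L, ℓ₁) := by
    rintro p ⟨h1, h2, h3, h4⟩
    constructor
    · exact ⟨h1, h3⟩
    · refine ⟨h2, ?_⟩
      have : a * p.1 ≤ a * L := by nlinarith
      simp only []
      linarith
  have hQcomp : IsCompact {p : ℝ × ℝ | 0 ≤ p.1 ∧ p.1 ≤ L ∧ 0 ≤ p.2 ∧ p.2 ≤ a * p.1 + ℓ} :=
    IsCompact.of_isClosed_subset isCompact_Icc hQc hQsub
  constructor
  · intro p hp
    have hp1 : 0 ≤ p.1 := hp.1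
    have hne : a * p.1 + ℓ ≠ 0 := (hDpos p.1 hp1).ne'
    have h1 : DifferentiableAt ℝ (fun p : ℝ × ℝ => ℓ * p.2) p :=
      (differentiable_snd.differentiableAt).const_mul ℓ
    have h2 : DifferentiableAt ℝ (fun p : ℝ × ℝ => a * p.1 + ℓ) p :=
      ((differentiable_fst.differentiableAt).const_mul a).add_const ℓ
    have h3 := h1.mul (h2.inv hne)
    apply DifferentiableAt.differentiableWithinAt
    simpa [div_eq_mul_inv] using (show DifferentiableAt ℝ (fun p : ℝ × ℝ => ℓ * p.2 * (a * p.1 + ℓ)⁻¹) p from h3)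
  -- the explicit integrand
  set F : ℝ × ℝ → ℝ := fun p =>
    (ℓ * p.2 * (-a / (a * p.1 + ℓ) ^ 2)) ^ 2 + (ℓ / (a * p.1 + ℓ)) ^ 2 with hF_def
  have hderiv1 : ∀ x y : ℝ, a * x + ℓ ≠ 0 →
      HasDerivAt (fun x : ℝ => ℓ * y / (a * x + ℓ)) (ℓ * y * (-a / (a * x + ℓ) ^ 2)) x := by
    intro x y hne
    have h0 : HasDerivAt (fun x : ℝ => a * x + ℓ) a x := by
      simpa using ((hasDerivAt_id x).const_mul a).add_const ℓ
    have h1 := (h0.inv hne).const_mul (ℓ * y)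
    simpa [div_eq_mul_inv, mul_comm, mul_assoc, neg_div] using h1
  have hderiv2 : ∀ x y : ℝ, HasDerivAt (fun y : ℝ => ℓ * y / (a * x + ℓ)) (ℓ / (a * x + ℓ)) y := by
    intro x y
    simpa using ((hasDerivAt_id y).const_mul ℓ).div_const (a * x + ℓ)
  have hcongr : ∀ p ∈ {p : ℝ × ℝ | 0 ≤ p.1 ∧ p.1 ≤ L ∧ 0 ≤ p.2 ∧ p.2 ≤ a * p.1 + ℓ},
      ((deriv (fun x : ℝ => ℓ * p.2 / (a * x + ℓ)) p.1) ^ 2 +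
        (deriv (fun y : ℝ => ℓ * y / (a * p.1 + ℓ)) p.2) ^ 2) = F p := by
    intro p hp
    have hne : a * p.1 + ℓ ≠ 0 := (hDpos p.1 hp.1).ne'
    rw [(hderiv1 p.1 p.2 hne).deriv, (hderiv2 p.1 p.2).deriv]
  -- continuity & integrability of F on Q
  have hFcont : ContinuousOn F {p : ℝ × ℝ | 0 ≤ p.1 ∧ p.1 ≤ L ∧ 0 ≤ p.2 ∧ p.2 ≤ a * p.1 + ℓ} := by
    apply ContinuousOn.add
    · apply ContinuousOn.pow
      apply ContinuousOn.mul
      · exact (continuous_const.mul continuous_snd).continuousOn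
      · exact ContinuousOn.div continuousOn_const
          (((continuous_const.mul continuous_fst).add continuous_const).pow _).continuousOn
          (fun p hp => pow_ne_zero _ (hDpos p.1 hp.1).ne')
    · exact (ContinuousOn.div continuousOn_const
        ((continuous_const.mul continuous_fst).add continuous_const).continuousOn
        (fun p hp => (hDpos p.1 hp.1).ne')).pow _
  have hFint : IntegrableOn F {p : ℝ × ℝ | 0 ≤ p.1 ∧ p.1 ≤ L ∧ 0 ≤ p.2 ∧ p.2 ≤ a * p.1 + ℓ} :=
    hFcont.integrableOn_compact hQcomp
  rw [setIntegral_congr_fun hQm hcongr]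
  -- Fubini
  have key : (∫ p in {p : ℝ × ℝ | 0 ≤ p.1 ∧ p.1 ≤ L ∧ 0 ≤ p.2 ∧ p.2 ≤ a * p.1 + ℓ}, F p)
      = ∫ x in Icc (0:ℝ) L, ∫ y in Icc (0:ℝ) (a * x + ℓ), F (x, y) := by
    rw [← integral_indicator hQm]
    rw [Measure.volume_eq_prod, integral_prod]
    · rw [← integral_indicator (measurableSet_Icc : MeasurableSet (Icc (0:ℝ) L))]
      congr 1
      funext x
      by_cases hx : x ∈ Icc (0:ℝ) L
      · rw [indicator_of_mem hx, ← integral_indicator (measurableSet_Icc)]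
        congr 1
        funext y
        by_cases hy : y ∈ Icc (0:ℝ) (a * x + ℓ)
        · rw [indicator_of_mem hy, indicator_of_mem]
          exact ⟨hx.1, hx.2, hy.1, hy.2⟩
        · rw [indicator_of_notMem hy, indicator_of_notMem]
          intro hmem
          exact hy ⟨hmem.2.2.1, hmem.2.2.2⟩
      · rw [indicator_of_notMem hx]
        have : ∀ y : ℝ, Set.indicator {p : ℝ × ℝ | 0 ≤ p.1 ∧ p.1 ≤ L ∧ 0 ≤ p.2 ∧ p.2 ≤ a * p.1 + ℓ} F (x, y) = 0 := by
          intro y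
          apply indicator_of_notMem
          intro hmem
          exact hx ⟨hmem.1, hmem.2.1⟩
        simp [this]
    · rw [← Measure.volume_eq_prod, integrable_indicator_iff hQm]
      exact hFint
  rw [key]
  -- inner integral
  have inner : ∀ x ∈ Icc (0:ℝ) L,
      (∫ y in Icc (0:ℝ) (a * x + ℓ), F (x, y))
        = ℓ ^ 2 * (a ^ 2 / 3 + 1) * (a * x + ℓ)⁻¹ := by
    intro x hx
    have hD : 0 < a * x + ℓ := hDpos x hx.1
    set D : ℝ := a * x + ℓ
    have h1 : (∫ y in Icc (0:ℝ) D, F (x, y)) = ∫ y in (0:ℝ)..D, F (x, y) := by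
      rw [intervalIntegral.integral_of_le hD.le, integral_Icc_eq_integral_Ioc]
    rw [h1]
    have hanti : ∀ y ∈ uIcc (0:ℝ) D,
        HasDerivAt (fun y : ℝ => (ℓ * a / D ^ 2) ^ 2 * y ^ 3 / 3 + (ℓ / D) ^ 2 * y)
          (F (x, y)) y := by
      intro y _
      have h2 := (((hasDerivAt_pow 3 y).const_mul ((ℓ * a / D ^ 2) ^ 2)).div_const 3).add
        ((hasDerivAt_id y).const_mul ((ℓ / D) ^ 2))
      refine h2.congr_deriv ?_
      simp [hF_def]
      ring
    rw [intervalIntegral.integral_eq_sub_of_hasDerivAt hanti]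
    · have : F ∘ (fun y => ((x : ℝ), y)) = fun y : ℝ => (ℓ * y * (-a / D ^ 2)) ^ 2 + (ℓ / D) ^ 2 := rfl
      field_simp
      ring
    · apply Continuous.intervalIntegrable
      have : (fun y : ℝ => F (x, y)) = fun y : ℝ => (ℓ * y * (-a / D ^ 2)) ^ 2 + (ℓ / D) ^ 2 := rfl
      rw [this]
      fun_prop
  rw [setIntegral_congr_fun measurableSet_Icc inner]
  -- outer integral
  have h2 : (∫ x in Icc (0:ℝ) L, ℓ ^ 2 * (a ^ 2 / 3 + 1) * (a * x + ℓ)⁻¹)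
      = ∫ x in (0:ℝ)..L, ℓ ^ 2 * (a ^ 2 / 3 + 1) * (a * x + ℓ)⁻¹ := by
    rw [intervalIntegral.integral_of_le hL.le, integral_Icc_eq_integral_Ioc]
  rw [h2]
  have houter : ∀ x ∈ uIcc (0:ℝ) L,
      HasDerivAt (fun x : ℝ => ℓ ^ 2 * (a ^ 2 / 3 + 1) / a * Real.log (a * x + ℓ))
        (ℓ ^ 2 * (a ^ 2 / 3 + 1) * (a * x + ℓ)⁻¹) x := by
    intro x hx
    rw [uIcc_of_le hL.le] at hx
    have hD : 0 < a * x + ℓ := hDpos x hx.1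
    have h0 : HasDerivAt (fun x : ℝ => a * x + ℓ) a x := by
      simpa using ((hasDerivAt_id x).const_mul a).add_const ℓ
    have h1 := (Real.hasDerivAt_log hD.ne').comp x h0
    have h3 := h1.const_mul (ℓ ^ 2 * (a ^ 2 / 3 + 1) / a)
    refine h3.congr_deriv ?_
    field_simp
  rw [intervalIntegral.integral_eq_sub_of_hasDerivAt houter]
  · rw [haL, mul_zero, zero_add, ← mul_sub, ← Real.log_div (by linarith) hℓ.ne']
    have hsub : ℓ₁ - ℓ ≠ 0 := by linarith
    have hLne : L ≠ 0 := hL.ne'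
    have hc : ℓ ^ 2 * (a ^ 2 / 3 + 1) / a = ℓ ^ 2 * L / (ℓ₁ - ℓ) + ℓ ^ 2 * (ℓ₁ - ℓ) / (3 * L) := by
      rw [ha_def]
      field_simp
      ring
    rw [hc]
    ring
  · apply ContinuousOn.intervalIntegrable
    apply ContinuousOn.mul continuousOn_const
    apply ContinuousOn.inv₀ ((continuous_const.mul continuous_id).add continuous_const).continuousOn
    intro x hx
    rw [uIcc_of_le hL.le] at hx
    exact (hDpos x hx.1).ne'
end

section
/- Let L > 0, L₁ > 0 and 0 < ℓ < ℓ₁ ≤ L₁ be real numbers. Let Q = {(x, y) ∈ ℝ² : 0 ≤ x ≤ L and 0 ≤ y ≤ ((ℓ₁ − ℓ)/L)·x + ℓ} and v(x, y) = ℓ·y / (((ℓ₁ − ℓ)/L)·x + ℓ). Then the Dirichlet integral ∫_Q [ (∂v/∂x)² + (∂v/∂y)² ] dx dy is at most (L + L₁²/(3L)) · ℓ. -/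
open MeasureTheory

set_option maxHeartbeats 1600000 in
/-- Let `L > 0`, `L₁ > 0` and `0 < ℓ < ℓ₁ ≤ L₁`. On the Euclidean trapezoid
`Q = {(x,y) : 0 ≤ x ≤ L, 0 ≤ y ≤ ((ℓ₁ - ℓ)/L) x + ℓ}`, the Dirichlet integral of
`v (x,y) = ℓ y / (((ℓ₁ - ℓ)/L) x + ℓ)` is at most `(L + L₁²/(3 L)) * ℓ`. -/
theorem stmt_4 (L L₁ ℓ ℓ₁ : ℝ) (hL : 0 < L) (hL₁ : 0 < L₁)
    (hℓ : 0 < ℓ) (hℓ₁ : ℓ < ℓ₁) (hℓ₁L₁ : ℓ₁ ≤ L₁)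
    (Q : Set (ℝ × ℝ))
    (hQ : Q = {p : ℝ × ℝ | 0 ≤ p.1 ∧ p.1 ≤ L ∧ 0 ≤ p.2 ∧
      p.2 ≤ ((ℓ₁ - ℓ) / L) * p.1 + ℓ})
    (v : ℝ × ℝ → ℝ)
    (hv : v = fun p : ℝ × ℝ => ℓ * p.2 / (((ℓ₁ - ℓ) / L) * p.1 + ℓ)) :
    (∫ p in Q, ((deriv (fun x : ℝ => v (x, p.2)) p.1) ^ 2 +
        (deriv (fun y : ℝ => v (p.1, y)) p.2) ^ 2)) ≤
      (L + L₁ ^ 2 / (3 * L)) * ℓ := by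
  subst hv
  set s : ℝ := (ℓ₁ - ℓ) / L with hs_def
  have hsL : s * L = ℓ₁ - ℓ := by rw [hs_def]; exact div_mul_cancel₀ _ hL.ne'
  have hs : 0 < s := div_pos (by linarith) hL
  have hgpos : ∀ x : ℝ, 0 ≤ x → 0 < s * x + ℓ := fun x hx => by nlinarith [mul_nonneg hs.le hx]
  clear_value s
  have hQmeas : MeasurableSet Q := by
    rw [hQ]
    apply MeasurableSet.inter (measurableSet_le measurable_const measurable_fst)
    apply MeasurableSet.inter (measurableSet_le measurable_fst measurable_const)
    apply MeasurableSet.inter (measurableSet_le measurable_const measurable_snd)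
    exact measurableSet_le measurable_snd (by fun_prop)
  set F : ℝ × ℝ → ℝ := fun p => (ℓ * p.2 * s) ^ 2 / (s * p.1 + ℓ) ^ 4
      + ℓ ^ 2 / (s * p.1 + ℓ) ^ 2 with hF
  set K : ℝ := ℓ ^ 2 * s ^ 2 / 3 + ℓ ^ 2 with hK
  have hKpos : 0 < K := by rw [hK]; nlinarith [pow_pos hℓ 2, sq_nonneg (ℓ * s)]
  clear_value F K
  -- step 1 : integrand equals F on Q
  have step1 : (∫ p in Q, ((deriv (fun x : ℝ =>
        (fun p : ℝ × ℝ => ℓ * p.2 / (s * p.1 + ℓ)) (x, p.2)) p.1) ^ 2 +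
        (deriv (fun y : ℝ => (fun p : ℝ × ℝ => ℓ * p.2 / (s * p.1 + ℓ)) (p.1, y)) p.2) ^ 2))
      = ∫ p in Q, F p := by
    apply setIntegral_congr_fun hQmeas
    intro p hp
    rw [hQ] at hp
    obtain ⟨hx0, hxL, hy0, hyg⟩ := hp
    have hc : 0 < s * p.1 + ℓ := hgpos _ hx0
    have h1 : HasDerivAt (fun t : ℝ => s * t + ℓ) s p.1 := by
      simpa using ((hasDerivAt_id p.1).const_mul s).add_const ℓ
    have h2 : HasDerivAt (fun t : ℝ => ℓ * p.2 / (s * t + ℓ))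
        ((0 * (s * p.1 + ℓ) - ℓ * p.2 * s) / (s * p.1 + ℓ) ^ 2) p.1 :=
      (hasDerivAt_const p.1 (ℓ * p.2)).div h1 hc.ne'
    have h3 : HasDerivAt (fun t : ℝ => ℓ * t / (s * p.1 + ℓ)) (ℓ * 1 / (s * p.1 + ℓ)) p.2 :=
      ((hasDerivAt_id p.2).const_mul ℓ).div_const _
    show (deriv (fun t : ℝ => ℓ * p.2 / (s * t + ℓ)) p.1) ^ 2 +
        (deriv (fun t : ℝ => ℓ * t / (s * p.1 + ℓ)) p.2) ^ 2 = F p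
    rw [h2.deriv, h3.deriv, hF]
    field_simp
    ring
  -- integrability
  have hFmeas : Measurable F := by rw [hF]; fun_prop
  have hQsub : Q ⊆ Set.Icc (0:ℝ) L ×ˢ Set.Icc (0:ℝ) ℓ₁ := by
    rw [hQ]
    rintro p ⟨hx0, hxL, hy0, hyg⟩
    refine ⟨⟨hx0, hxL⟩, hy0, hyg.trans ?_⟩
    nlinarith [mul_le_mul_of_nonneg_left hxL hs.le]
  have hQfin : volume Q ≠ ⊤ :=
    ((measure_mono hQsub).trans_lt (isCompact_Icc.prod isCompact_Icc).measure_lt_top).ne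
  have hIntOn : IntegrableOn F Q := by
    apply Measure.integrableOn_of_bounded (M := s ^ 2 + 1) hQfin hFmeas.aestronglyMeasurable
    apply ae_restrict_of_forall_mem hQmeas
    intro p hp
    rw [hQ] at hp
    obtain ⟨hx0, hxL, hy0, hyg⟩ := hp
    have hc : 0 < s * p.1 + ℓ := hgpos _ hx0
    have hcl : ℓ ≤ s * p.1 + ℓ := by nlinarith [mul_nonneg hs.le hx0]
    simp only [hF]
    rw [Real.norm_eq_abs, abs_of_nonneg (by positivity)]
    have e1 : (ℓ * p.2 * s) ^ 2 / (s * p.1 + ℓ) ^ 4 ≤ s ^ 2 := by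
      rw [div_le_iff₀ (pow_pos hc 4)]
      have hlp : ℓ * p.2 ≤ (s * p.1 + ℓ) ^ 2 := by nlinarith
      have hlp0 : 0 ≤ ℓ * p.2 := mul_nonneg hℓ.le hy0
      have h5 : (ℓ * p.2) ^ 2 ≤ ((s * p.1 + ℓ) ^ 2) ^ 2 := pow_le_pow_left₀ hlp0 hlp 2
      nlinarith [mul_le_mul_of_nonneg_left h5 (sq_nonneg s)]
    have e2 : ℓ ^ 2 / (s * p.1 + ℓ) ^ 2 ≤ 1 := by
      rw [div_le_one (pow_pos hc 2)]
      nlinarith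
    simpa using add_le_add e1 e2
  -- Fubini
  have fub : ∫ p in Q, F p
      = ∫ x in Set.Icc (0:ℝ) L, ∫ y in Set.Icc (0:ℝ) (s * x + ℓ), F (x, y) := by
    rw [← integral_indicator hQmeas]
    have hInt : Integrable (Q.indicator F) (volume.prod volume) := by
      rw [← Measure.volume_eq_prod]
      exact (integrable_indicator_iff hQmeas).2 hIntOn
    rw [Measure.volume_eq_prod, integral_prod _ hInt]
    have hinner : ∀ x : ℝ, (∫ y, Q.indicator F (x, y))
        = Set.indicator (Set.Icc (0:ℝ) L)
            (fun x => ∫ y in Set.Icc (0:ℝ) (s * x + ℓ), F (x, y)) x := by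
      intro x
      by_cases hx : x ∈ Set.Icc (0:ℝ) L
      · rw [Set.indicator_of_mem hx, ← integral_indicator measurableSet_Icc]
        congr 1
        funext y
        by_cases hy : y ∈ Set.Icc (0:ℝ) (s * x + ℓ)
        · rw [Set.indicator_of_mem hy, Set.indicator_of_mem]
          rw [hQ]
          exact ⟨hx.1, hx.2, hy.1, hy.2⟩
        · rw [Set.indicator_of_notMem hy, Set.indicator_of_notMem]
          rw [hQ]
          rintro ⟨h1, h2, h3, h4⟩
          exact hy ⟨h3, h4⟩
      · have : ∀ y : ℝ, Q.indicator F (x, y) = 0 := by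
          intro y
          apply Set.indicator_of_notMem
          rw [hQ]
          rintro ⟨h1, h2, _, _⟩
          exact hx ⟨h1, h2⟩
        rw [Set.indicator_of_notMem hx]
        simp [this]
    simp_rw [hinner]
    rw [integral_indicator measurableSet_Icc]
  -- inner integral
  have inner : ∀ x ∈ Set.Icc (0:ℝ) L,
      (∫ y in Set.Icc (0:ℝ) (s * x + ℓ), F (x, y)) = K / (s * x + ℓ) := by
    intro x hx
    have hc : 0 < s * x + ℓ := hgpos _ hx.1
    have hc' : s * x + ℓ ≠ 0 := hc.ne'
    simp only [hF]
    rw [MeasureTheory.integral_Icc_eq_integral_Ioc, ← intervalIntegral.integral_of_le hc.le]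
    have hG : ∀ y : ℝ, HasDerivAt
        (fun y : ℝ => (ℓ * s) ^ 2 / (3 * (s * x + ℓ) ^ 4) * y ^ 3
          + ℓ ^ 2 / (s * x + ℓ) ^ 2 * y)
        ((ℓ * y * s) ^ 2 / (s * x + ℓ) ^ 4 + ℓ ^ 2 / (s * x + ℓ) ^ 2) y := by
      intro y
      have h := ((hasDerivAt_pow 3 y).const_mul ((ℓ * s) ^ 2 / (3 * (s * x + ℓ) ^ 4))).add
        ((hasDerivAt_id y).const_mul (ℓ ^ 2 / (s * x + ℓ) ^ 2))
      refine h.congr_deriv ?_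
      push_cast
      field_simp
    have hcont : IntervalIntegrable
        (fun y : ℝ => (ℓ * y * s) ^ 2 / (s * x + ℓ) ^ 4 + ℓ ^ 2 / (s * x + ℓ) ^ 2)
        volume 0 (s * x + ℓ) := by
      apply Continuous.intervalIntegrable
      exact Continuous.add
        (Continuous.div_const (Continuous.pow
          (Continuous.mul (Continuous.mul continuous_const continuous_id) continuous_const) 2) _)
        continuous_const
    rw [intervalIntegral.integral_eq_sub_of_hasDerivAt (fun y _ => hG y) hcont]
    rw [hK]
    field_simp
    ring
  have step2 : (∫ x in Set.Icc (0:ℝ) L, ∫ y in Set.Icc (0:ℝ) (s * x + ℓ), F (x, y))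
      = ∫ x in Set.Icc (0:ℝ) L, K / (s * x + ℓ) :=
    setIntegral_congr_fun measurableSet_Icc inner
  -- outer integral
  have outer : (∫ x in Set.Icc (0:ℝ) L, K / (s * x + ℓ))
      = K / s * (Real.log ℓ₁ - Real.log ℓ) := by
    rw [MeasureTheory.integral_Icc_eq_integral_Ioc, ← intervalIntegral.integral_of_le hL.le]
    have hΦ : ∀ x ∈ Set.uIcc (0:ℝ) L, HasDerivAt
        (fun x : ℝ => K / s * Real.log (s * x + ℓ)) (K / (s * x + ℓ)) x := by
      intro x hx
      rw [Set.uIcc_of_le hL.le] at hx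
      have hc : 0 < s * x + ℓ := hgpos _ hx.1
      have h1 : HasDerivAt (fun t : ℝ => s * t + ℓ) s x := by
        simpa using ((hasDerivAt_id x).const_mul s).add_const ℓ
      have h2 := ((Real.hasDerivAt_log hc.ne').comp x h1).const_mul (K / s)
      refine h2.congr_deriv ?_
      rw [inv_mul_eq_div, div_mul_div_comm, mul_comm K s, mul_div_mul_left _ _ hs.ne']
    rw [intervalIntegral.integral_eq_sub_of_hasDerivAt hΦ ?_]
    · have h1 : s * L + ℓ = ℓ₁ := by rw [hsL]; ring
      have h0 : s * 0 + ℓ = ℓ := by ring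
      rw [h1, h0]
      try ring
    · apply ContinuousOn.intervalIntegrable
      apply ContinuousOn.div continuousOn_const (by fun_prop)
      intro x hx
      rw [Set.uIcc_of_le hL.le] at hx
      exact (hgpos _ hx.1).ne'
  -- final bound
  have hl₁ : (0:ℝ) < ℓ₁ := lt_trans hℓ hℓ₁
  have hlog : Real.log ℓ₁ - Real.log ℓ ≤ (ℓ₁ - ℓ) / ℓ := by
    rw [← Real.log_div hl₁.ne' hℓ.ne']
    have h := Real.log_le_sub_one_of_pos (x := ℓ₁ / ℓ) (div_pos hl₁ hℓ)
    have h2 : ℓ₁ / ℓ - 1 = (ℓ₁ - ℓ) / ℓ := by field_simp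
    linarith
  have hfin : K / s * (Real.log ℓ₁ - Real.log ℓ) ≤ (L + L₁ ^ 2 / (3 * L)) * ℓ := by
    have h1 : K / s * (Real.log ℓ₁ - Real.log ℓ) ≤ K / s * ((ℓ₁ - ℓ) / ℓ) :=
      mul_le_mul_of_nonneg_left hlog (div_nonneg hKpos.le hs.le)
    have h2 : K / s * ((ℓ₁ - ℓ) / ℓ) = K * L / ℓ := by
      rw [← hsL]
      field_simp
    have h3 : K * L / ℓ = (L + (ℓ₁ - ℓ) ^ 2 / (3 * L)) * ℓ := by
      rw [hK, hs_def]
      field_simp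
      ring
    have h4 : (ℓ₁ - ℓ) ^ 2 / (3 * L) ≤ L₁ ^ 2 / (3 * L) := by
      rw [div_le_div_iff₀ (by linarith) (by linarith)]
      have h4sq : (ℓ₁ - ℓ) ^ 2 ≤ L₁ ^ 2 := by nlinarith
      nlinarith [mul_le_mul_of_nonneg_right h4sq (by linarith : (0:ℝ) ≤ 3 * L)]
    have h5 : (L + (ℓ₁ - ℓ) ^ 2 / (3 * L)) * ℓ ≤ (L + L₁ ^ 2 / (3 * L)) * ℓ :=
      mul_le_mul_of_nonneg_right (by linarith) hℓ.le
    linarith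
  calc _ = ∫ p in Q, F p := step1
    _ = _ := fub
    _ = _ := step2
    _ = K / s * (Real.log ℓ₁ - Real.log ℓ) := outer
    _ ≤ _ := hfin
end

section
/- Let 0 < α ≤ 1 and set K(n) = ⌈n (log n)^α⌉ for n ≥ 2. Let C₀ > 0, let ψ : {1, 2, 3, …} → (0, ∞), and for each n ≥ 1 let A_n be a subset of E_n. Suppose there exists N such that ψ(n) + |A_n| ≤ K(n) for all n ≥ N. Let a assign a positive conductance to every edge of the rooted infinite binary tree with a(e) ≤ C₀ for every edge e, and a(e) ≤ ψ(n)/2^n for every e ∈ E_n \ A_n. Then there is no unit flow from the root of finite energy. -/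
noncomputable def Mfn (n : ℕ) : ℝ := ((max 2 n : ℕ) : ℝ)

lemma Mfn_ge_two (n : ℕ) : (2:ℝ) ≤ Mfn n := by
  unfold Mfn; exact_mod_cast Nat.le_max_left 2 n

lemma not_summable_one_div_mul_log :
    ¬ Summable (fun n : ℕ => 1 / (Mfn n * Real.log (Mfn n))) := by
  set g : ℕ → ℝ := fun n => 1 / (Mfn n * Real.log (Mfn n)) with hg
  have hlogpos : ∀ n, (0:ℝ) < Real.log (Mfn n) := fun n =>
    Real.log_pos (by have := Mfn_ge_two n; linarith)
  have hpos : ∀ n : ℕ, 0 < Mfn n * Real.log (Mfn n) := by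
    intro n
    have h2 := Mfn_ge_two n
    exact mul_pos (by linarith) (hlogpos n)
  have h_nonneg : ∀ n, 0 ≤ g n := fun n => le_of_lt (by
    simpa [hg] using one_div_pos.mpr (hpos n))
  have h_mono : ∀ ⦃m n : ℕ⦄, 0 < m → m ≤ n → g n ≤ g m := by
    intro m n _ hmn
    have hm2 := Mfn_ge_two m
    have hle : Mfn m ≤ Mfn n := by
      unfold Mfn; exact_mod_cast max_le_max le_rfl hmn
    have hlog : Real.log (Mfn m) ≤ Real.log (Mfn n) :=
      Real.log_le_log (by linarith) hle
    apply one_div_le_one_div_of_le (hpos m)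
    exact mul_le_mul hle hlog (le_of_lt (hlogpos m)) (by linarith)
  intro hsum
  rw [← summable_condensed_iff_of_nonneg h_nonneg h_mono] at hsum
  have hcond : ∀ k : ℕ, (2:ℝ) ^ (k+1) * g (2 ^ (k+1)) = (1 / Real.log 2) * (1 / ((k:ℝ)+1)) := by
    intro k
    have h2le : 2 ≤ 2 ^ (k+1) := by
      calc 2 = 2 ^ 1 := rfl
      _ ≤ 2 ^ (k+1) := Nat.pow_le_pow_right (by norm_num) (by omega)
    have hM : Mfn (2 ^ (k+1)) = (2:ℝ) ^ (k+1) := by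
      unfold Mfn; rw [max_eq_right h2le]; push_cast; ring
    have hlog : Real.log ((2:ℝ) ^ (k+1)) = ((k:ℝ)+1) * Real.log 2 := by
      rw [Real.log_pow]; push_cast; ring
    have h2pos : (0:ℝ) < (2:ℝ) ^ (k+1) := by positivity
    have hl2 : (0:ℝ) < Real.log 2 := Real.log_pos (by norm_num)
    have hk1 : (0:ℝ) < (k:ℝ) + 1 := by positivity
    simp only [hg, hM, hlog]
    field_simp
  have hsum' : Summable (fun k : ℕ => (1 / Real.log 2) * (1 / ((k:ℝ)+1))) := by
    have h1 := (summable_nat_add_iff 1).mpr hsum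
    exact h1.congr (fun k => by simpa using hcond k)
  have hsum'' : Summable (fun k : ℕ => (1 / ((k:ℝ)+1))) := by
    have hl2 : Real.log 2 ≠ 0 := ne_of_gt (Real.log_pos (by norm_num))
    have := hsum'.mul_left (Real.log 2)
    refine this.congr (fun k => ?_)
    field_simp
  have : Summable (fun k : ℕ => (1 / (k : ℝ))) := by
    rw [← summable_nat_add_iff 1]
    exact hsum''.congr (fun k => by push_cast; ring_nf)
  exact Real.not_summable_one_div_natCast this

/-- Level-`n` vertex set of the rooted binary tree, as lists of length `n`. -/
def Ltree : ℕ → Finset (List Bool)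
  | 0 => {[]}
  | (n+1) => (Ltree n).biUnion (fun v => {v ++ [true], v ++ [false]})

lemma length_of_mem_Ltree : ∀ n, ∀ v ∈ Ltree n, v.length = n := by
  intro n
  induction n with
  | zero => intro v hv; simp [Ltree] at hv; simp [hv]
  | succ n ih =>
      intro v hv
      simp only [Ltree, Finset.mem_biUnion, Finset.mem_insert, Finset.mem_singleton] at hv
      obtain ⟨w, hw, h⟩ := hv
      rcases h with h | h <;> subst h <;> simp [ih w hw]

lemma mem_Ltree_of_length : ∀ n, ∀ v : List Bool, v.length = n → v ∈ Ltree n := by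
  intro n
  induction n with
  | zero => intro v hv; simp [Ltree, List.length_eq_zero_iff.mp hv]
  | succ n ih =>
      intro v hv
      rcases v.eq_nil_or_concat' with h | ⟨w, b, rfl⟩
      · simp [h] at hv
      · simp only [List.length_append, List.length_singleton] at hv
        have hw : w ∈ Ltree n := ih w (by omega)
        simp only [Ltree, Finset.mem_biUnion]
        exact ⟨w, hw, by cases b <;> simp⟩

lemma card_Ltree_le : ∀ n, (Ltree n).card ≤ 2 ^ n := by
  intro n
  induction n with
  | zero => simp [Ltree]
  | succ n ih =>
      calc (Ltree (n+1)).card ≤ ∑ v ∈ Ltree n, ({v ++ [true], v ++ [false]} : Finset (List Bool)).card :=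
            Finset.card_biUnion_le
        _ ≤ ∑ _v ∈ Ltree n, 2 := Finset.sum_le_sum (fun v _ => Finset.card_insert_le _ _ |>.trans (by simp))
        _ = 2 * (Ltree n).card := by rw [Finset.sum_const, smul_eq_mul, mul_comm]
        _ ≤ 2 ^ (n+1) := by rw [pow_succ, mul_comm]; exact Nat.mul_le_mul_right 2 ih

lemma sum_Ltree_succ (n : ℕ) (h : List Bool → ℝ) :
    ∑ v ∈ Ltree (n+1), h v = ∑ v ∈ Ltree n, (h (v ++ [true]) + h (v ++ [false])) := by
  rw [show Ltree (n+1) = (Ltree n).biUnion (fun v => {v ++ [true], v ++ [false]}) from rfl]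
  rw [Finset.sum_biUnion]
  · refine Finset.sum_congr rfl (fun v _ => ?_)
    rw [Finset.sum_pair (by simp)]
  · intro v hv w hw hvw
    simp only [Finset.disjoint_left, Finset.mem_insert, Finset.mem_singleton]
    rintro x (rfl | rfl) (h | h) <;>
      exact hvw ((List.append_inj h (by
        rw [length_of_mem_Ltree _ _ hv, length_of_mem_Ltree _ _ hw])).1)

/-- Recurrence for the Cantor tree with few long cuffs (Theorem 1.5(i)): let
`0 < α ≤ 1`, `K n = ⌈n (log n)^α⌉`, `C₀ > 0`, `ψ : ℕ → (0,∞)`, and let `A n ⊆ E n`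
(edges of the rooted binary tree at level `n`, an edge being identified with the
nonempty binary string `v` of length `n` it leads to).  Assume `ψ n + |A n| ≤ K n` for
all large `n`.  If the conductances satisfy `a e ≤ C₀` everywhere and
`a e ≤ ψ n / 2 ^ n` for `e ∈ E n \ A n`, then there is no unit flow from the root of
finite energy. -/
theorem stmt_14 (α : ℝ) (hα0 : 0 < α) (hα1 : α ≤ 1)
    (C₀ : ℝ) (hC₀ : 0 < C₀) (ψ : ℕ → ℝ) (hψpos : ∀ n : ℕ, 1 ≤ n → 0 < ψ n)
    (A : ℕ → Set (List Bool)) (hA : ∀ n : ℕ, ∀ v ∈ A n, v.length = n)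
    (hK : ∃ N : ℕ, 2 ≤ N ∧ ∀ n : ℕ, N ≤ n →
      ψ n + ((A n).ncard : ℝ) ≤ (Nat.ceil ((n : ℝ) * Real.log n ^ α) : ℝ))
    (a : List Bool → ℝ) (hapos : ∀ v : List Bool, v ≠ [] → 0 < a v)
    (haC₀ : ∀ v : List Bool, v ≠ [] → a v ≤ C₀)
    (haψ : ∀ n : ℕ, 1 ≤ n → ∀ v : List Bool, v.length = n → v ∉ A n →
      a v ≤ ψ n / 2 ^ n) :
    ¬ ∃ f : List Bool → ℝ,
        (∀ v : List Bool, v ≠ [] → f v = f (v ++ [true]) + f (v ++ [false])) ∧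
        f [true] + f [false] = 1 ∧
        (∑' v : {l : List Bool // l ≠ []}, ENNReal.ofReal (f v.1 ^ 2 / a v.1)) < ⊤ := by
  classical
  rintro ⟨f, hflow, hroot, hE⟩
  obtain ⟨N, hN2, hKle⟩ := hK
  set c : ℝ := max 1 C₀ with hc
  have hc1 : (1:ℝ) ≤ c := le_max_left _ _
  have hcC : C₀ ≤ c := le_max_right _ _
  have hcpos : (0:ℝ) < c := by linarith
  set M : ℕ := max N 3 with hM
  have hM3 : 3 ≤ M := le_max_right _ _
  have hMN : N ≤ M := le_max_left _ _
  -- nonemptiness of level vertices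
  have hne : ∀ (m : ℕ) (v : List Bool), v ∈ Ltree m → 1 ≤ m → v ≠ [] := by
    intro m v hv hm h
    subst h
    have := length_of_mem_Ltree m [] hv
    simp at this; omega
  -- flow conservation at each level
  have hS : ∀ m : ℕ, 1 ≤ m → ∑ v ∈ Ltree m, f v = 1 := by
    intro m hm
    induction m with
    | zero => omega
    | succ m ih =>
      rcases Nat.eq_zero_or_pos m with rfl | hm1
      · rw [sum_Ltree_succ 0 f]
        simpa [Ltree] using hroot
      · rw [sum_Ltree_succ m f]
        rw [← ih hm1]
        exact Finset.sum_congr rfl fun v hv => (hflow v (hne m v hv hm1)).symm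
  -- level energies
  set En : ℕ → ℝ := fun m => ∑ v ∈ Ltree m, f v ^ 2 / a v with hEn
  have hEn_nonneg : ∀ m, 1 ≤ m → 0 ≤ En m := by
    intro m hm
    refine Finset.sum_nonneg fun v hv => ?_
    have := hapos v (hne m v hv hm)
    positivity
  -- Cauchy-Schwarz
  have hCS : ∀ m : ℕ, 1 ≤ m → 1 ≤ (∑ v ∈ Ltree m, a v) * En m := by
    intro m hm
    have h := Finset.sum_mul_sq_le_sq_mul_sq (Ltree m)
      (fun v => Real.sqrt (a v)) (fun v => f v / Real.sqrt (a v))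
    have h1 : ∑ v ∈ Ltree m, Real.sqrt (a v) * (f v / Real.sqrt (a v)) = 1 := by
      rw [← hS m hm]
      refine Finset.sum_congr rfl fun v hv => ?_
      have hs : Real.sqrt (a v) ≠ 0 :=
        ne_of_gt (Real.sqrt_pos.mpr (hapos v (hne m v hv hm)))
      rw [mul_comm, div_mul_cancel₀ _ hs]
    have h2 : ∑ v ∈ Ltree m, Real.sqrt (a v) ^ 2 = ∑ v ∈ Ltree m, a v := by
      refine Finset.sum_congr rfl fun v hv => ?_
      exact Real.sq_sqrt (le_of_lt (hapos v (hne m v hv hm)))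
    have h3 : ∑ v ∈ Ltree m, (f v / Real.sqrt (a v)) ^ 2 = En m := by
      refine Finset.sum_congr rfl fun v hv => ?_
      rw [div_pow, Real.sq_sqrt (le_of_lt (hapos v (hne m v hv hm)))]
    rw [h1, h2, h3, one_pow] at h
    exact h
  -- bound on conductance sums
  have hsum_a : ∀ m : ℕ, 1 ≤ m → ∑ v ∈ Ltree m, a v ≤ ψ m + C₀ * ((A m).ncard : ℝ) := by
    intro m hm
    have hAfin : (A m).Finite :=
      Set.Finite.subset (Ltree m).finite_toSet
        (fun v hv => mem_Ltree_of_length m v (hA m v hv))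
    rw [← Finset.sum_filter_add_sum_filter_not (Ltree m) (· ∈ A m)]
    have hb1 : ∑ v ∈ (Ltree m).filter (· ∈ A m), a v ≤ C₀ * ((A m).ncard : ℝ) := by
      calc ∑ v ∈ (Ltree m).filter (· ∈ A m), a v
          ≤ ∑ _v ∈ (Ltree m).filter (· ∈ A m), C₀ :=
            Finset.sum_le_sum fun v hv =>
              haC₀ v (hne m v (Finset.mem_of_mem_filter v hv) hm)
        _ = ((Ltree m).filter (· ∈ A m)).card * C₀ := by
            rw [Finset.sum_const, nsmul_eq_mul]
        _ ≤ ((A m).ncard : ℝ) * C₀ := by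
            have hsub : (↑((Ltree m).filter (· ∈ A m)) : Set (List Bool)) ⊆ A m := by
              intro v hv
              simpa using (Finset.mem_filter.mp (by simpa using hv)).2
            have hcard : ((Ltree m).filter (· ∈ A m)).card ≤ (A m).ncard := by
              rw [← Set.ncard_coe_finset]
              exact Set.ncard_le_ncard hsub hAfin
            exact mul_le_mul_of_nonneg_right (by exact_mod_cast hcard) (le_of_lt hC₀)
        _ = C₀ * ((A m).ncard : ℝ) := mul_comm _ _
    have hb2 : ∑ v ∈ (Ltree m).filter (fun v => ¬ v ∈ A m), a v ≤ ψ m := by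
      have hψm := hψpos m hm
      calc ∑ v ∈ (Ltree m).filter (fun v => ¬ v ∈ A m), a v
          ≤ ∑ _v ∈ (Ltree m).filter (fun v => ¬ v ∈ A m), ψ m / 2 ^ m :=
            Finset.sum_le_sum fun v hv => by
              have hv1 := Finset.mem_filter.mp hv
              exact haψ m hm v (length_of_mem_Ltree m v hv1.1) hv1.2
        _ = ((Ltree m).filter (fun v => ¬ v ∈ A m)).card * (ψ m / 2 ^ m) := by
            rw [Finset.sum_const, nsmul_eq_mul]
        _ ≤ (2 ^ m : ℝ) * (ψ m / 2 ^ m) := by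
            have h1 : ((Ltree m).filter (fun v => ¬ v ∈ A m)).card ≤ 2 ^ m :=
              le_trans (Finset.card_filter_le _ _) (card_Ltree_le m)
            exact mul_le_mul_of_nonneg_right (by exact_mod_cast h1) (by positivity)
        _ = ψ m := by field_simp
    linarith
  -- for m ≥ M: the ceiling bound
  have hlog1 : ∀ m : ℕ, 3 ≤ m → 1 ≤ Real.log m := by
    intro m hm
    rw [Real.le_log_iff_exp_le (by positivity)]
    calc Real.exp 1 ≤ 2.7182818286 := le_of_lt Real.exp_one_lt_d9
      _ ≤ (3:ℝ) := by norm_num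
      _ ≤ (m:ℝ) := by exact_mod_cast hm
  have hEnlb : ∀ m : ℕ, M ≤ m → 1 / (2 * c * ((m:ℝ) * Real.log m)) ≤ En m := by
    intro m hm
    have hm3 : 3 ≤ m := le_trans hM3 hm
    have hm1 : 1 ≤ m := by omega
    have hmR : (3:ℝ) ≤ (m:ℝ) := by exact_mod_cast hm3
    have hlm := hlog1 m hm3
    have hml : (1:ℝ) ≤ (m:ℝ) * Real.log m := by nlinarith
    have hceil : (Nat.ceil ((m:ℝ) * Real.log m ^ α) : ℝ) ≤ 2 * ((m:ℝ) * Real.log m) := by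
      have hrw : Real.log m ^ α ≤ Real.log m := by
        have h := Real.rpow_le_rpow_of_exponent_le hlm hα1
        rwa [Real.rpow_one] at h
      have h0 : (0:ℝ) ≤ (m:ℝ) * Real.log m ^ α := by
        have : (0:ℝ) ≤ Real.log m ^ α := Real.rpow_nonneg (by linarith) α
        positivity
      have hc1 : (Nat.ceil ((m:ℝ) * Real.log m ^ α) : ℝ) < (m:ℝ) * Real.log m ^ α + 1 :=
        Nat.ceil_lt_add_one h0
      have hx : (m:ℝ) * Real.log m ^ α ≤ (m:ℝ) * Real.log m :=
        mul_le_mul_of_nonneg_left hrw (by positivity)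
      linarith
    have hsa : ∑ v ∈ Ltree m, a v ≤ 2 * c * ((m:ℝ) * Real.log m) := by
      have h1 := hsum_a m hm1
      have h2 := hKle m (le_trans hMN hm)
      have hψm := hψpos m hm1
      have hncard : (0:ℝ) ≤ ((A m).ncard : ℝ) := by positivity
      calc ∑ v ∈ Ltree m, a v ≤ ψ m + C₀ * ((A m).ncard : ℝ) := h1
        _ ≤ c * (ψ m + ((A m).ncard : ℝ)) := by nlinarith
        _ ≤ c * (Nat.ceil ((m:ℝ) * Real.log m ^ α) : ℝ) :=
            mul_le_mul_of_nonneg_left h2 (le_of_lt hcpos)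
        _ ≤ c * (2 * ((m:ℝ) * Real.log m)) :=
            mul_le_mul_of_nonneg_left hceil (le_of_lt hcpos)
        _ = 2 * c * ((m:ℝ) * Real.log m) := by ring
    have h1 := hCS m hm1
    have h2 : 1 ≤ 2 * c * ((m:ℝ) * Real.log m) * En m :=
      le_trans h1 (mul_le_mul_of_nonneg_right hsa (hEn_nonneg m hm1))
    rw [div_le_iff₀ (by nlinarith)]
    linarith [mul_comm (En m) (2 * c * ((m:ℝ) * Real.log m))]
  -- lower-bound function
  set r : ℕ → ℝ := fun m => if M ≤ m then 1 / (2 * c * ((m:ℝ) * Real.log m)) else 0 with hr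
  have hr_nonneg : ∀ m, 0 ≤ r m := by
    intro m
    simp only [hr]
    split
    · rename_i h
      have hm3 : 3 ≤ m := le_trans hM3 h
      have hmR : (3:ℝ) ≤ (m:ℝ) := by exact_mod_cast hm3
      have hlm := hlog1 m hm3
      positivity
    · exact le_rfl
  have hrEn : ∀ m : ℕ, 1 ≤ m → r m ≤ En m := by
    intro m hm
    simp only [hr]
    split
    · rename_i h; exact hEnlb m h
    · exact hEn_nonneg m hm
  -- the tsum comparison
  set F : {l : List Bool // l ≠ []} → ENNReal := fun v => ENNReal.ofReal (f v.1 ^ 2 / a v.1)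
    with hF
  have hφinj : Function.Injective
      (fun p : (Σ n : ℕ, {v : List Bool // v ∈ Ltree (n+1)}) =>
        (⟨p.2.1, hne (p.1+1) p.2.1 p.2.2 (by omega)⟩ : {l : List Bool // l ≠ []})) := by
    rintro ⟨n, v, hv⟩ ⟨n', v', hv'⟩ h
    simp only [Subtype.mk.injEq] at h
    have hn : n = n' := by
      have h1 := length_of_mem_Ltree (n+1) v hv
      have h2 := length_of_mem_Ltree (n'+1) v' hv'
      rw [h] at h1; omega
    subst hn
    exact congrArg (Sigma.mk n) (Subtype.ext h)
  have hkey : (∑' n : ℕ, ENNReal.ofReal (En (n+1))) ≤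
      ∑' v : {l : List Bool // l ≠ []}, ENNReal.ofReal (f v.1 ^ 2 / a v.1) := by
    have h1 := ENNReal.tsum_comp_le_tsum_of_injective hφinj F
    rw [ENNReal.tsum_sigma'] at h1
    refine le_trans (le_of_eq ?_) h1
    refine tsum_congr fun n => ?_
    rw [Finset.tsum_subtype (Ltree (n+1)) (fun v => ENNReal.ofReal (f v ^ 2 / a v))]
    rw [hEn]
    rw [ENNReal.ofReal_sum_of_nonneg]
    intro v hv
    have := hapos v (hne (n+1) v hv (by omega))
    positivity
  have hrkey : (∑' n : ℕ, ENNReal.ofReal (r (n+1))) ≤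
      ∑' v : {l : List Bool // l ≠ []}, ENNReal.ofReal (f v.1 ^ 2 / a v.1) :=
    le_trans (ENNReal.tsum_le_tsum fun n =>
      ENNReal.ofReal_le_ofReal (hrEn (n+1) (by omega))) hkey
  -- hence r is summable
  have hrsum : Summable r := by
    have hne_top : (∑' n : ℕ, ENNReal.ofReal (r (n+1))) ≠ ⊤ :=
      ne_top_of_le_ne_top (ne_of_lt hE) hrkey
    have h1 : Summable fun n : ℕ => (ENNReal.ofReal (r (n+1))).toReal :=
      ENNReal.summable_toReal hne_top
    have h2 : Summable fun n : ℕ => r (n+1) :=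
      h1.congr fun n => ENNReal.toReal_ofReal (hr_nonneg (n+1))
    exact (summable_nat_add_iff 1).mp h2
  -- contradiction with divergence of ∑ 1/(n log n)
  apply not_summable_one_div_mul_log
  have h1 : Summable fun n : ℕ => r (n + M) := (summable_nat_add_iff M).mpr hrsum
  have h2 : Summable fun n : ℕ =>
      1 / (Mfn (n + M) * Real.log (Mfn (n + M))) := by
    have := h1.mul_left (2 * c)
    refine this.congr fun n => ?_
    have hMle : M ≤ n + M := by omega
    have hMfn : Mfn (n + M) = ((n + M : ℕ) : ℝ) := by
      unfold Mfn
      rw [max_eq_right (by omega)]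
    have hm3 : 3 ≤ n + M := by omega
    have hmR : (3:ℝ) ≤ ((n + M : ℕ):ℝ) := by exact_mod_cast hm3
    have hlm := hlog1 (n + M) hm3
    simp only [hr, if_pos hMle, hMfn]
    push_cast
    rw [mul_one_div, div_mul_cancel_left₀ (show (2*c) ≠ 0 by positivity), one_div]
  exact (summable_nat_add_iff M).mp h2
end

section
/- For every real α > 1 there exist a set A of edges of the rooted infinite binary tree, a vertex x, and a real-valued function f on the nonempty strings such that: (1) |A ∩ E_n| ≤ ⌈n (log n)^α⌉ for every n ≥ 2; (2) f(v) = 0 whenever the parent edge of v does not belong to A; (3) f(v) equals the sum of f over the two children of v for every nonempty string v ≠ x, and the sum of f over the two children of the root equals 0 if x is not the root; (4) the sum of f over the two children of x equals f(x) + 1 (with f(x) interpreted as 0 if x is the root); and (5) ∑_v f(v)² < ∞. -/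
open Real

noncomputable def myF (β : ℝ) (n : ℕ) : ℝ := (n : ℝ) * Real.log n ^ β / 8

open Classical in
noncomputable def myh (β : ℝ) : ℕ → ℕ
  | 0 => 0
  | n+1 => if (2:ℝ) ^ (myh β n + 2) ≤ myF β (n+1) then myh β n + 1 else myh β n

lemma myF_nonneg (β : ℝ) (n : ℕ) : 0 ≤ myF β n := by
  unfold myF
  have := Real.log_natCast_nonneg n
  positivity

lemma myF_mono {β : ℝ} (hβ : 0 < β) : Monotone (myF β) := by
  intro m n hmn
  unfold myF
  have h1 : Real.log m ≤ Real.log n := by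
    rcases Nat.eq_zero_or_pos m with hm | hm
    · simp [hm, Real.log_natCast_nonneg]
    · exact Real.log_le_log (by exact_mod_cast hm) (by exact_mod_cast hmn)
  have h2 : Real.log m ^ β ≤ Real.log n ^ β :=
    Real.rpow_le_rpow (Real.log_natCast_nonneg m) h1 hβ.le
  have h3 : (m : ℝ) ≤ n := by exact_mod_cast hmn
  have h0 := Real.log_natCast_nonneg m
  have hpow : (0:ℝ) ≤ Real.log m ^ β := Real.rpow_nonneg h0 β
  gcongr

lemma myF_small {β : ℝ} (hβ1 : 0 < β) (hβ2 : β ≤ 2) {k : ℕ} (hk : k ≤ 6) : myF β k < 4 := by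
  have h6 : myF β k ≤ myF β 6 := myF_mono hβ1 hk
  have hlog6 : Real.log 6 ≤ 2 := by
    rw [Real.log_le_iff_le_exp (by norm_num)]
    have h := Real.exp_one_gt_d9
    have : Real.exp 2 = Real.exp 1 * Real.exp 1 := by
      rw [← Real.exp_add]; norm_num
    nlinarith
  have hlog6n : (0:ℝ) ≤ Real.log 6 := Real.log_nonneg (by norm_num)
  have h1 : Real.log 6 ^ β ≤ (2:ℝ) ^ β := Real.rpow_le_rpow hlog6n hlog6 hβ1.le
  have h2 : (2:ℝ) ^ β ≤ (2:ℝ) ^ (2:ℝ) := Real.rpow_le_rpow_of_exponent_le one_le_two hβ2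
  have h3 : (2:ℝ) ^ (2:ℝ) = 4 := by
    rw [show (2:ℝ) = ((2:ℕ):ℝ) by norm_num, Real.rpow_natCast]; norm_num
  have : myF β 6 ≤ 6 * 4 / 8 := by
    unfold myF
    have : ((6:ℕ):ℝ) = 6 := by norm_num
    rw [this]
    have : Real.log 6 ^ β ≤ 4 := by linarith
    have h0 : (0:ℝ) ≤ Real.log 6 ^ β := Real.rpow_nonneg hlog6n β
    nlinarith
  linarith

lemma log_ge_one {n : ℕ} (hn : 3 ≤ n) : 1 ≤ Real.log n := by
  rw [Real.le_log_iff_exp_le (by exact_mod_cast (by omega : 0 < n) : (0:ℝ) < n)]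
  have : (n:ℝ) ≥ 3 := by exact_mod_cast hn
  nlinarith [Real.exp_one_lt_d9]

lemma myF_doubling {β : ℝ} (hβ1 : 1 ≤ β) (hβ2 : β ≤ 2) {n : ℕ} (hn : 6 ≤ n) :
    myF β (n+1) ≤ 2 * myF β n := by
  have hlog1 : 1 ≤ Real.log n := log_ge_one (by omega)
  have hn6 : (6:ℝ) ≤ n := by exact_mod_cast hn
  have hnpos : (0:ℝ) < n := by linarith
  -- log (n+1) ≤ (7/6) * log n
  have hstep : Real.log ((n:ℝ)+1) ≤ (7/6) * Real.log n := by
    have hdiv : Real.log (((n:ℝ)+1)/n) ≤ 1/n := by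
      have h1 : (0:ℝ) < ((n:ℝ)+1)/n := by positivity
      have := Real.log_le_sub_one_of_pos h1
      have : Real.log (((n:ℝ)+1)/n) ≤ ((n:ℝ)+1)/n - 1 := this
      have heq : ((n:ℝ)+1)/n - 1 = 1/n := by field_simp; ring
      linarith [heq ▸ this]
    have hsplit : Real.log ((n:ℝ)+1) = Real.log n + Real.log (((n:ℝ)+1)/n) := by
      rw [Real.log_div (by linarith) (by linarith)]; ring
    have h1n : (1:ℝ)/n ≤ 1/6 := by
      apply div_le_div_of_nonneg_left <;> linarith
    nlinarith
  have hlogp : 0 ≤ Real.log ((n:ℝ)+1) := Real.log_nonneg (by linarith)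
  have hrpow : Real.log ((n:ℝ)+1) ^ β ≤ (7/6:ℝ)^β * Real.log n ^ β := by
    calc Real.log ((n:ℝ)+1) ^ β ≤ ((7/6) * Real.log n) ^ β :=
          Real.rpow_le_rpow hlogp hstep (by linarith)
      _ = (7/6:ℝ)^β * Real.log n ^ β := Real.mul_rpow (by norm_num) (by linarith)
  have h76 : (7/6:ℝ)^β ≤ (7/6:ℝ)^(2:ℝ) := Real.rpow_le_rpow_of_exponent_le (by norm_num) hβ2
  have h76v : (7/6:ℝ)^(2:ℝ) = 49/36 := by
    rw [show (2:ℝ) = ((2:ℕ):ℝ) by norm_num, Real.rpow_natCast]; norm_num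
  have hlognp : (0:ℝ) ≤ Real.log n ^ β := Real.rpow_nonneg (by linarith) β
  have hkey : Real.log ((n:ℝ)+1) ^ β ≤ (49/36) * Real.log n ^ β := by
    calc Real.log ((n:ℝ)+1) ^ β ≤ (7/6:ℝ)^β * Real.log n ^ β := hrpow
      _ ≤ (49/36) * Real.log n ^ β := by rw [← h76v]; exact mul_le_mul_of_nonneg_right h76 hlognp
  unfold myF
  push_cast
  rw [div_le_iff₀ (by norm_num : (0:ℝ) < 8)]
  have hbig : (1:ℝ) ≤ Real.log n ^ β := Real.one_le_rpow hlog1 (by linarith)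
  nlinarith [hkey, hlognp, hbig]

lemma myh_succ (β : ℝ) (n : ℕ) : myh β (n+1) = myh β n ∨ myh β (n+1) = myh β n + 1 := by
  rw [myh]
  split <;> simp

lemma myh_L {β : ℝ} (hβ1 : 1 ≤ β) (hβ2 : β ≤ 2) : ∀ n, myF β n ≤ (2:ℝ) ^ (myh β n + 2)
  | 0 => by
      have : myF β 0 = 0 := by unfold myF; simp
      rw [this, myh]; positivity
  | (n+1) => by
      rw [myh]
      split
      · rename_i hc
        by_cases hn : 6 ≤ n
        · calc myF β (n+1) ≤ 2 * myF β n := myF_doubling hβ1 hβ2 hn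
            _ ≤ 2 * (2:ℝ) ^ (myh β n + 2) := by
                have := myh_L hβ1 hβ2 n; linarith
            _ = (2:ℝ) ^ (myh β n + 1 + 2) := by ring
        · have : myF β (n+1) < 4 := myF_small (by linarith) hβ2 (by omega)
          have h4 : (4:ℝ) ≤ (2:ℝ) ^ (myh β n + 1 + 2) := by
            calc (4:ℝ) = 2^2 := by norm_num
              _ ≤ (2:ℝ) ^ (myh β n + 1 + 2) := by
                  apply pow_le_pow_right₀ one_le_two; omega
          linarith
      · rename_i hc
        push_neg at hc
        linarith

lemma myh_U {β : ℝ} (hβ : 0 < β) : ∀ n, (2:ℝ) ^ (myh β n) ≤ max 1 (myF β n)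
  | 0 => by rw [myh]; simp
  | (n+1) => by
      rw [myh]
      split
      · rename_i hc
        have h2 : (2:ℝ) ^ (myh β n + 1) ≤ myF β (n+1) / 2 := by
          have : (2:ℝ) ^ (myh β n + 2) = 2 * (2:ℝ) ^ (myh β n + 1) := by ring
          linarith [hc, this ▸ hc]
        have : myF β (n+1) / 2 ≤ myF β (n+1) := by linarith [myF_nonneg β (n+1)]
        exact le_max_of_le_right (by linarith)
      · calc (2:ℝ) ^ (myh β n) ≤ max 1 (myF β n) := myh_U hβ n
          _ ≤ max 1 (myF β (n+1)) := max_le_max le_rfl (myF_mono hβ (by omega))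

def myP (β : ℝ) (v : List Bool) : Prop :=
  ∀ i < v.length, v.getD i false = true → myh β (i+1) = myh β i + 1

lemma myh_succ' (β : ℝ) (n : ℕ) : myh β (n+1) = myh β n ∨ myh β (n+1) = myh β n + 1 := by
  rw [myh]; split <;> simp

lemma card_splits (β : ℝ) :
    ∀ n, ((Finset.range n).filter fun i => myh β (i+1) = myh β i + 1).card = myh β n
  | 0 => by simp [myh]
  | (n+1) => by
      rw [Finset.range_add_one, Finset.filter_insert]
      rcases myh_succ' β n with h | h
      · rw [if_neg (by omega), card_splits β n, h]
      · rw [if_pos h, Finset.card_insert_of_notMem (by simp), card_splits β n, h]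

lemma myP_append (β : ℝ) (v : List Bool) (b : Bool) :
    myP β (v ++ [b]) ↔ myP β v ∧ (b = true → myh β (v.length + 1) = myh β v.length + 1) := by
  constructor
  · intro h
    refine ⟨fun i hi hgi => ?_, fun hb => ?_⟩
    · have := h i (by simp; omega) (by rwa [List.getD_append _ _ _ _ hi])
      exact this
    · have := h v.length (by simp)
      rw [List.getD_append_right _ _ _ _ le_rfl] at this
      simp at this
      exact this hb
  · rintro ⟨h1, h2⟩ i hi hgi
    simp at hi
    rcases Nat.lt_or_ge i v.length with hlt | hge
    · exact h1 i hlt (by rwa [List.getD_append _ _ _ _ hlt] at hgi)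
    · have : i = v.length := by omega
      subst this
      rw [List.getD_append_right _ _ _ _ le_rfl] at hgi
      simp at hgi
      exact h2 hgi

lemma card_level (β : ℝ) (u : Finset (List Bool)) (n : ℕ)
    (hu : ∀ v ∈ u, v.length = n ∧ myP β v) : u.card ≤ 2 ^ (myh β n) := by
  classical
  set S : Finset ℕ := (Finset.range n).filter fun i => myh β (i+1) = myh β i + 1 with hS
  have hcard : S.card = myh β n := card_splits β n
  have : u.card ≤ S.powerset.card := by
    apply Finset.card_le_card_of_injOn
      (fun v => (Finset.range n).filter fun i => v.getD i false = true)
    · intro v hv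
      rw [Finset.mem_coe, Finset.mem_powerset]
      intro i hi
      rw [Finset.mem_filter] at hi
      rw [hS, Finset.mem_filter]
      obtain ⟨hlen, hP⟩ := hu v hv
      exact ⟨hi.1, hP i (by rw [hlen]; exact Finset.mem_range.mp hi.1) hi.2⟩
    · intro v hv w hw heq
      obtain ⟨hlv, _⟩ := hu v hv
      obtain ⟨hlw, _⟩ := hu w hw
      apply List.ext_getElem (by omega)
      intro i h1 h2
      have hin : i < n := by omega
      have := Finset.ext_iff.mp heq i
      simp only [Finset.mem_filter, Finset.mem_range] at this
      have hv' : v.getD i false = v[i] := List.getD_eq_getElem v false h1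
      have hw' : w.getD i false = w[i] := List.getD_eq_getElem w false h2
      rw [hv', hw'] at this
      cases hvb : v[i] <;> cases hwb : w[i] <;> simp_all
  rwa [Finset.card_powerset, hcard] at this

lemma summable_g {β : ℝ} (hβ1 : 1 < β) :
    Summable (fun k : ℕ => (((k:ℝ)+2) * Real.log ((k:ℝ)+2) ^ β)⁻¹) := by
  set g : ℕ → ℝ := fun k => (((k:ℝ)+2) * Real.log ((k:ℝ)+2) ^ β)⁻¹ with hg
  have hlog2 : (0:ℝ) < Real.log 2 := Real.log_pos (by norm_num)
  have hDpos : ∀ k : ℕ, (0:ℝ) < ((k:ℝ)+2) * Real.log ((k:ℝ)+2) ^ β := by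
    intro k
    have hk0 : (0:ℝ) ≤ (k:ℝ) := Nat.cast_nonneg k
    have h2 : (2:ℝ) ≤ (k:ℝ)+2 := by linarith
    have : (0:ℝ) < Real.log ((k:ℝ)+2) := lt_of_lt_of_le hlog2 (Real.log_le_log (by norm_num) h2)
    positivity
  have hg_nonneg : ∀ k, 0 ≤ g k := fun k => (inv_nonneg).mpr (hDpos k).le
  have hg_mono : ∀ ⦃m n : ℕ⦄, 0 < m → m ≤ n → g n ≤ g m := by
    intro m n _ hmn
    apply inv_anti₀ (hDpos m)
    have hm0 : (0:ℝ) ≤ (m:ℝ) := Nat.cast_nonneg m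
    have hlogm : (0:ℝ) ≤ Real.log ((m:ℝ)+2) := Real.log_nonneg (by linarith)
    have hle : ((m:ℝ)+2) ≤ (n:ℝ)+2 := by
      have : (m:ℝ) ≤ n := by exact_mod_cast hmn
      linarith
    have hlog : Real.log ((m:ℝ)+2) ≤ Real.log ((n:ℝ)+2) := Real.log_le_log (by positivity) hle
    have := Real.rpow_le_rpow hlogm hlog (by linarith : (0:ℝ) ≤ β)
    have h0 : (0:ℝ) ≤ Real.log ((m:ℝ)+2) ^ β := Real.rpow_nonneg hlogm β
    nlinarith [hDpos m]
  rw [← summable_condensed_iff_of_nonneg hg_nonneg hg_mono]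
  -- Summable fun k => 2^k * g (2^k)
  rw [← summable_nat_add_iff 1]
  have hM : Summable (fun k : ℕ => ((Real.log 2 ^ β)⁻¹) * (((k:ℝ)+1) ^ β)⁻¹) := by
    apply Summable.mul_left
    have h := Real.summable_nat_rpow_inv.mpr hβ1
    have h2 := (summable_nat_add_iff 1).mpr h
    apply h2.congr
    intro k
    push_cast
    rfl
  apply hM.of_nonneg_of_le
  · intro k
    have := hDpos (2^(k+1))
    positivity
  · intro k
    have hcast : (((2^(k+1):ℕ)):ℝ) = (2:ℝ)^(k+1) := by push_cast; ring
    have hkl : (0:ℝ) ≤ ((k:ℝ)+1) * Real.log 2 := by positivity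
    have hloglb : ((k:ℝ)+1) * Real.log 2 ≤ Real.log ((2:ℝ)^(k+1) + 2) := by
      have h1 : ((k:ℝ)+1) * Real.log 2 = Real.log ((2:ℝ)^(k+1)) := by
        rw [Real.log_pow]; push_cast; ring
      rw [h1]
      apply Real.log_le_log (by positivity)
      linarith [pow_pos (by norm_num : (0:ℝ) < 2) (k+1)]
    have hrp : (((k:ℝ)+1) * Real.log 2) ^ β ≤ Real.log ((2:ℝ)^(k+1) + 2) ^ β :=
      Real.rpow_le_rpow hkl hloglb (by linarith)
    have hmul : (((k:ℝ)+1) * Real.log 2) ^ β = ((k:ℝ)+1)^β * Real.log 2 ^ β :=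
      Real.mul_rpow (by positivity) hlog2.le
    have hD := hDpos (2^(k+1))
    rw [hcast] at hD
    have h2pos : (0:ℝ) < (2:ℝ)^(k+1) := by positivity
    have hrpos : (0:ℝ) < (((k:ℝ)+1) * Real.log 2) ^ β := by
      apply Real.rpow_pos_of_pos; positivity
    -- goal : 2^(k+1) * g (2^(k+1)) ≤ (log 2 ^ β)⁻¹ * ((k+1)^β)⁻¹
    show (2:ℝ)^(k+1) * (((((2^(k+1):ℕ)):ℝ)+2) * Real.log (((2^(k+1):ℕ):ℝ)+2) ^ β)⁻¹ ≤ _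
    rw [hcast]
    rw [mul_inv, ← mul_assoc]
    have key : (2:ℝ)^(k+1) * ((2:ℝ)^(k+1) + 2)⁻¹ ≤ 1 := by
      rw [mul_inv_le_iff₀ (by positivity)]; linarith
    calc (2:ℝ)^(k+1) * ((2:ℝ)^(k+1) + 2)⁻¹ * (Real.log ((2:ℝ)^(k+1) + 2) ^ β)⁻¹
        ≤ 1 * (Real.log ((2:ℝ)^(k+1) + 2) ^ β)⁻¹ := by
          apply mul_le_mul_of_nonneg_right key
          have : (0:ℝ) < Real.log ((2:ℝ)^(k+1) + 2) ^ β := by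
            apply Real.rpow_pos_of_pos
            have : (0:ℝ) < Real.log 2 := hlog2
            nlinarith [hloglb, hlog2, hkl]
          positivity
      _ ≤ ((((k:ℝ)+1) * Real.log 2) ^ β)⁻¹ := by
          rw [one_mul]
          exact inv_anti₀ hrpos hrp
      _ = (Real.log 2 ^ β)⁻¹ * (((k:ℝ)+1)^β)⁻¹ := by
          rw [hmul, mul_inv, mul_comm]

lemma summable_bnd {β : ℝ} (hβ1 : 1 < β) (hβ2 : β ≤ 2) :
    Summable (fun n : ℕ => ((2:ℝ) ^ (myh β n))⁻¹) := by
  rw [← summable_nat_add_iff 2]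
  have hg := (summable_g hβ1).mul_left 32
  apply hg.of_nonneg_of_le
  · intro k; positivity
  · intro k
    have hL := myh_L hβ1.le hβ2 (k+2)
    have hFeq : myF β (k+2) = ((k:ℝ)+2) * Real.log ((k:ℝ)+2) ^ β / 8 := by
      unfold myF; push_cast; ring_nf
    have hlog2 : (0:ℝ) < Real.log 2 := Real.log_pos (by norm_num)
    have hDpos : (0:ℝ) < ((k:ℝ)+2) * Real.log ((k:ℝ)+2) ^ β := by
      have hk0 : (0:ℝ) ≤ (k:ℝ) := Nat.cast_nonneg k
      have h2 : (2:ℝ) ≤ (k:ℝ)+2 := by linarith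
      have : (0:ℝ) < Real.log ((k:ℝ)+2) := lt_of_lt_of_le hlog2 (Real.log_le_log (by norm_num) h2)
      positivity
    have h1 : ((k:ℝ)+2) * Real.log ((k:ℝ)+2) ^ β / 8 ≤ (2:ℝ) ^ (myh β (k+2) + 2) := by
      rw [← hFeq]; exact hL
    have h2 : (2:ℝ) ^ (myh β (k+2) + 2) = 4 * (2:ℝ) ^ (myh β (k+2)) := by ring
    have hp : (0:ℝ) < (2:ℝ) ^ (myh β (k+2)) := by positivity
    rw [h2] at h1
    calc ((2:ℝ) ^ (myh β (k+2)))⁻¹ = 1 / (2:ℝ) ^ (myh β (k+2)) := (one_div _).symm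
      _ ≤ 32 / (((k:ℝ)+2) * Real.log ((k:ℝ)+2) ^ β) := by
          rw [div_le_div_iff₀ hp hDpos]; linarith
      _ = 32 * (((k:ℝ)+2) * Real.log ((k:ℝ)+2) ^ β)⁻¹ := by rw [div_eq_mul_inv]

/-- Theorem 1.5(ii), flow formulation: for every `α > 1` there exist a set `A` of edges
of the rooted infinite binary tree (an edge being identified with the nonempty binary
string it leads to), a vertex `x`, and a unit flow `f` from `x` supported on `A`, of
finite energy for unit conductances, such that `|A ∩ E n| ≤ ⌈n (log n)^α⌉` for every
`n ≥ 2`. -/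
theorem stmt_15 (α : ℝ) (hα : 1 < α) :
    ∃ (A : Set (List Bool)) (x : List Bool) (f : List Bool → ℝ),
      (∀ n : ℕ, 2 ≤ n →
        (A ∩ {v : List Bool | v.length = n}).ncard ≤
          Nat.ceil ((n : ℝ) * Real.log n ^ α)) ∧
      (∀ v : List Bool, v ≠ [] → v ∉ A → f v = 0) ∧
      (∀ v : List Bool, v ≠ [] → v ≠ x → f v = f (v ++ [true]) + f (v ++ [false])) ∧
      (x ≠ [] → f [true] + f [false] = 0) ∧
      (f (x ++ [true]) + f (x ++ [false]) = (if x = [] then 0 else f x) + 1) ∧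
      Summable (fun v : {l : List Bool // l ≠ []} => f v.1 ^ 2) := by
  classical
  set β := min α 2 with hβdef
  have hβ1 : 1 < β := lt_min hα one_lt_two
  have hβ2 : β ≤ 2 := min_le_right α 2
  have hβα : β ≤ α := min_le_left α 2
  refine ⟨{v : List Bool | v ≠ [] ∧ myP β v}, [],
    fun v => if myP β v then ((2:ℝ) ^ (myh β v.length))⁻¹ else 0, ?_, ?_, ?_, ?_, ?_, ?_⟩
  · -- counting
    intro n hn
    have h2n : ((2:ℝ) ^ (myh β n)) ≤ (Nat.ceil ((n : ℝ) * Real.log n ^ α) : ℝ) := by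
      have hU := myh_U (by linarith : (0:ℝ) < β) n
      have hceil1 : (1:ℝ) ≤ (Nat.ceil ((n : ℝ) * Real.log n ^ α) : ℝ) := by
        have hpos : (0:ℝ) < (n : ℝ) * Real.log n ^ α := by
          have hn2 : (2:ℝ) ≤ (n:ℝ) := by exact_mod_cast hn
          have hlog : (0:ℝ) < Real.log n :=
            Real.log_pos (by linarith)
          have := Real.rpow_pos_of_pos hlog α
          nlinarith
        exact_mod_cast Nat.one_le_ceil_iff.mpr hpos
      rcases le_or_gt (myF β n) 1 with hF | hF
      · calc (2:ℝ) ^ (myh β n) ≤ max 1 (myF β n) := hU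
          _ ≤ 1 := max_le le_rfl hF
          _ ≤ _ := hceil1
      · have hFle : myF β n ≤ (n : ℝ) * Real.log n ^ α := by
          rcases le_or_gt 3 n with h3 | h3
          · have hlog1 : 1 ≤ Real.log n := by
              rw [Real.le_log_iff_exp_le (by exact_mod_cast (by omega : 0 < n) : (0:ℝ) < n)]
              have : (3:ℝ) ≤ (n:ℝ) := by exact_mod_cast h3
              nlinarith [Real.exp_one_lt_d9]
            have hr : Real.log n ^ β ≤ Real.log n ^ α :=
              Real.rpow_le_rpow_of_exponent_le hlog1 hβα
            unfold myF
            have hn0 : (0:ℝ) ≤ (n:ℝ) := Nat.cast_nonneg n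
            nlinarith [Real.rpow_nonneg (by linarith : (0:ℝ) ≤ Real.log n) β]
          · -- n = 2 : myF β 2 ≤ 1 < ... contradiction with hF
            interval_cases n
            · exfalso
              have : myF β 2 ≤ 1 := by
                unfold myF
                have hlog2 : Real.log ((2:ℕ):ℝ) ≤ 1 := by
                  push_cast
                  nlinarith [Real.log_two_lt_d9, Real.log_pos (by norm_num : (1:ℝ) < 2)]
                have h0 : (0:ℝ) ≤ Real.log ((2:ℕ):ℝ) := Real.log_natCast_nonneg 2
                have := Real.rpow_le_one h0 hlog2 (by linarith : (0:ℝ) ≤ β)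
                push_cast at this ⊢
                nlinarith
              linarith
        calc (2:ℝ) ^ (myh β n) ≤ max 1 (myF β n) := hU
          _ = myF β n := max_eq_right hF.le
          _ ≤ (n : ℝ) * Real.log n ^ α := hFle
          _ ≤ _ := Nat.le_ceil _
    have hcard : ({v : List Bool | v ≠ [] ∧ myP β v} ∩ {v : List Bool | v.length = n}).ncard
        ≤ 2 ^ (myh β n) := by
      set S : Finset ℕ := (Finset.range n).filter (fun i => myh β (i+1) = myh β i + 1) with hS
      have : ({v : List Bool | v ≠ [] ∧ myP β v} ∩ {v : List Bool | v.length = n}).ncard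
          ≤ (↑S.powerset : Set (Finset ℕ)).ncard := by
        apply Set.ncard_le_ncard_of_injOn
          (fun v => (Finset.range n).filter fun i => v.getD i false = true)
        · rintro v ⟨⟨-, hP⟩, hlen⟩
          simp only [Set.mem_setOf_eq] at hlen
          simp only [Finset.coe_powerset, Set.mem_preimage, Set.mem_powerset_iff,
            Finset.coe_subset]
          intro i hi
          rw [Finset.mem_filter] at hi
          rw [hS, Finset.mem_filter]
          exact ⟨hi.1, hP i (by rw [hlen]; exact Finset.mem_range.mp hi.1) hi.2⟩
        · rintro v ⟨-, hlv⟩ w ⟨-, hlw⟩ heq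
          simp only [Set.mem_setOf_eq] at hlv hlw
          apply List.ext_getElem (by omega)
          intro i h1 h2
          have := Finset.ext_iff.mp heq i
          simp only [Finset.mem_filter, Finset.mem_range] at this
          have hv' : v.getD i false = v[i] := List.getD_eq_getElem v false h1
          have hw' : w.getD i false = w[i] := List.getD_eq_getElem w false h2
          rw [hv', hw'] at this
          have hin : i < n := by omega
          cases hvb : v[i] <;> cases hwb : w[i] <;> simp_all
      rwa [Set.ncard_coe_finset, Finset.card_powerset, card_splits β n] at this
    have : ((2:ℕ) ^ (myh β n) : ℝ) ≤ (Nat.ceil ((n : ℝ) * Real.log n ^ α) : ℝ) := by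
      push_cast
      exact h2n
    have hfin : (2:ℕ) ^ (myh β n) ≤ Nat.ceil ((n : ℝ) * Real.log n ^ α) := by exact_mod_cast this
    exact le_trans hcard hfin
  · -- support
    intro v hv hvA
    simp only [Set.mem_setOf_eq, not_and_or] at hvA
    rcases hvA with h | h
    · exact absurd hv (by simpa using h)
    · exact if_neg h
  · -- conservation
    intro v hv _
    dsimp only
    by_cases hP : myP β v
    · have hlen : (v ++ [true]).length = v.length + 1 := by simp
      have hlen' : (v ++ [false]).length = v.length + 1 := by simp
      rcases myh_succ β v.length with hs | hs
      · -- no split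
        have hPt : ¬ myP β (v ++ [true]) := by
          rw [myP_append]
          rintro ⟨-, h⟩
          have := h rfl
          omega
        have hPf : myP β (v ++ [false]) := by
          rw [myP_append]
          exact ⟨hP, by simp⟩
        rw [if_pos hP, if_neg hPt, if_pos hPf, hlen', hs]
        ring
      · -- split
        have hPt : myP β (v ++ [true]) := by
          rw [myP_append]; exact ⟨hP, fun _ => hs⟩
        have hPf : myP β (v ++ [false]) := by
          rw [myP_append]; exact ⟨hP, by simp⟩
        rw [if_pos hP, if_pos hPt, if_pos hPf, hlen, hlen', hs]
        rw [pow_succ]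
        rw [mul_inv]
        ring
    · have hPt : ¬ myP β (v ++ [true]) := by
        rw [myP_append]; tauto
      have hPf : ¬ myP β (v ++ [false]) := by
        rw [myP_append]; tauto
      rw [if_neg hP, if_neg hPt, if_neg hPf]
      ring
  · intro h; exact absurd rfl h
  · -- source condition
    dsimp only
    have h0 : myh β 0 = 0 := by rw [myh]
    have hF1 : myF β 1 = 0 := by
      unfold myF
      simp [Real.zero_rpow (by linarith : β ≠ 0)]
    have hcond : ¬ ((2:ℝ) ^ (0 + 2) ≤ myF β 1) := by
      rw [hF1]
      intro hc
      have := pow_pos (by norm_num : (0:ℝ) < 2) (0 + 2)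
      linarith
    have hmyh1 : myh β 1 = 0 := by
      rw [myh, h0, if_neg hcond]
    have hPt : ¬ myP β ([] ++ [true]) := by
      rw [myP_append]
      rintro ⟨-, h⟩
      have h2 := h rfl
      simp only [List.length_nil] at h2
      rw [show (0:ℕ)+1 = 1 from rfl] at h2
      rw [hmyh1, h0] at h2
      omega
    have hPf : myP β ([] ++ [false]) := by
      rw [myP_append]
      exact ⟨fun i hi => by simp at hi, by simp⟩
    rw [if_pos rfl, if_neg hPt, if_pos hPf]
    have : ([] ++ [false] : List Bool).length = 1 := by simp
    rw [this, hmyh1]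
    norm_num
  · -- summability
    apply summable_of_sum_le (c := ∑' n, ((2:ℝ) ^ (myh β n))⁻¹)
    · intro v
      positivity
    · intro u
      set bnd : ℕ → ℝ := fun n => ((2:ℝ) ^ (myh β n))⁻¹ with hbnd
      have hbnd_nonneg : ∀ n, 0 ≤ bnd n := fun n => by positivity
      set F : {l : List Bool // l ≠ []} → ℝ :=
        fun v => (if myP β v.1 then ((2:ℝ) ^ (myh β v.1.length))⁻¹ else 0) ^ 2 with hF
      set t : Finset ℕ := u.image (fun v => v.1.length) with ht
      have hfib : ∑ v ∈ u, F v
          = ∑ n ∈ t, ∑ v ∈ u.filter (fun v => v.1.length = n), F v :=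
        (Finset.sum_fiberwise_of_maps_to (fun v hv => Finset.mem_image_of_mem _ hv) F).symm
      have hinner : ∀ n ∈ t, ∑ v ∈ u.filter (fun v => v.1.length = n), F v ≤ bnd n := by
        intro n _
        set w := u.filter (fun v => v.1.length = n) with hw
        set w' := w.filter (fun v => myP β v.1) with hw'
        have hsub : ∑ v ∈ w', F v = ∑ v ∈ w, F v := by
          apply Finset.sum_subset (Finset.filter_subset _ _)
          intro v hv hnv
          have : ¬ myP β v.1 := by
            intro hp
            exact hnv (Finset.mem_filter.mpr ⟨hv, hp⟩)
          simp [hF, this]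
        have hconst : ∑ v ∈ w', F v = w'.card * (((2:ℝ) ^ (myh β n))⁻¹) ^ 2 := by
          rw [Finset.sum_congr rfl (fun v hv => ?_), Finset.sum_const, nsmul_eq_mul]
          rw [Finset.mem_filter] at hv
          have hlen : v.1.length = n := (Finset.mem_filter.mp hv.1).2
          simp [hF, hv.2, hlen]
        have hcardle : w'.card ≤ 2 ^ (myh β n) := by
          have himg : (w'.image Subtype.val).card = w'.card :=
            Finset.card_image_of_injective _ Subtype.val_injective
          rw [← himg]
          apply card_level β
          intro v hv
          rw [Finset.mem_image] at hv
          obtain ⟨a, ha, rfl⟩ := hv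
          rw [Finset.mem_filter] at ha
          exact ⟨(Finset.mem_filter.mp ha.1).2, ha.2⟩
        have hpos : (0:ℝ) < (2:ℝ) ^ (myh β n) := by positivity
        calc ∑ v ∈ w, F v = w'.card * (((2:ℝ) ^ (myh β n))⁻¹) ^ 2 := by
              rw [← hsub, hconst]
          _ ≤ ((2:ℝ) ^ (myh β n)) * (((2:ℝ) ^ (myh β n))⁻¹) ^ 2 := by
              apply mul_le_mul_of_nonneg_right _ (by positivity)
              calc (w'.card : ℝ) ≤ ((2 ^ (myh β n) : ℕ) : ℝ) := by exact_mod_cast hcardle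
                _ = (2:ℝ) ^ (myh β n) := by push_cast; ring
          _ = bnd n := by
              rw [hbnd]
              field_simp
      calc ∑ v ∈ u, F v ≤ ∑ n ∈ t, bnd n := by
            rw [hfib]; exact Finset.sum_le_sum hinner
        _ ≤ ∑' n, bnd n :=
            (summable_bnd hβ1 hβ2).sum_le_tsum t (fun n _ => hbnd_nonneg n)
end

section
/- Let M be a matching of the rooted infinite binary tree (a set of edges no two of which share a vertex). Let C₀ ≥ 1 and C ≥ 1, and let ψ : {1, 2, 3, …} → (0, ∞) satisfy ψ(n+1) ≤ C·ψ(n) for all n ≥ 1 and ∑_{n ≥ 1} 1/ψ(n) = ∞. Let a assign a positive conductance to every edge with a(e) ≤ C₀ for every edge e, and a(e) ≤ ψ(n)/2^n for every e ∈ E_n \ M. Then there is no unit flow from the root of finite energy. -/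
open Finset

namespace Stmt16Aux

/-- The set of binary strings of length `n`. -/
def lvl : ℕ → Finset (List Bool)
  | 0 => {([] : List Bool)}
  | n + 1 => (lvl n).biUnion fun v => {v ++ [true], v ++ [false]}

lemma length_of_mem_lvl : ∀ n, ∀ v ∈ lvl n, v.length = n := by
  intro n
  induction n with
  | zero => intro v hv; simp only [lvl, mem_singleton] at hv; simp [hv]
  | succ n ih =>
    intro v hv
    simp only [lvl, mem_biUnion, mem_insert, mem_singleton] at hv
    obtain ⟨w, hw, h⟩ := hv
    rcases h with h | h <;> subst h <;> simp [ih w hw]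

lemma append_single_inj {v w : List Bool} {b c : Bool} (h : v ++ [b] = w ++ [c]) :
    v = w ∧ b = c := by
  obtain ⟨h1, h2⟩ := List.append_inj' h rfl
  exact ⟨h1, by simpa using h2⟩

lemma child_disjoint {v w : List Bool} (h : v ≠ w) :
    Disjoint ({v ++ [true], v ++ [false]} : Finset (List Bool))
      ({w ++ [true], w ++ [false]} : Finset (List Bool)) := by
  rw [Finset.disjoint_left]
  intro u hu hu'
  simp only [mem_insert, mem_singleton] at hu hu'
  rcases hu with rfl | rfl <;> rcases hu' with h' | h' <;>
    exact h (append_single_inj h').1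

lemma sum_pair_child (v : List Bool) (g : List Bool → ℝ) :
    ∑ u ∈ ({v ++ [true], v ++ [false]} : Finset (List Bool)), g u
      = g (v ++ [true]) + g (v ++ [false]) := by
  rw [Finset.sum_pair]
  simp

lemma sum_child_biUnion (s : Finset (List Bool)) (g : List Bool → ℝ) :
    ∑ u ∈ s.biUnion (fun v => {v ++ [true], v ++ [false]}), g u
      = ∑ v ∈ s, (g (v ++ [true]) + g (v ++ [false])) := by
  rw [Finset.sum_biUnion]
  · exact Finset.sum_congr rfl fun v _ => sum_pair_child v g
  · intro x _ y _ hxy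
    exact child_disjoint hxy

lemma sum_lvl_succ (n : ℕ) (g : List Bool → ℝ) :
    ∑ u ∈ lvl (n + 1), g u = ∑ v ∈ lvl n, (g (v ++ [true]) + g (v ++ [false])) := by
  rw [show lvl (n + 1) = (lvl n).biUnion fun v => {v ++ [true], v ++ [false]} from rfl]
  exact sum_child_biUnion _ _

lemma card_lvl_le (n : ℕ) : (lvl n).card ≤ 2 ^ n := by
  induction n with
  | zero => simp [lvl]
  | succ n ih =>
    calc (lvl (n + 1)).card
        ≤ ∑ v ∈ lvl n, ({v ++ [true], v ++ [false]} : Finset (List Bool)).card :=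
          Finset.card_biUnion_le
      _ ≤ ∑ _v ∈ lvl n, 2 := Finset.sum_le_sum fun v _ => by
          exact (Finset.card_insert_le _ _).trans (by simp)
      _ = 2 * (lvl n).card := by rw [Finset.sum_const, smul_eq_mul, mul_comm]
      _ ≤ 2 * 2 ^ n := by omega
      _ = 2 ^ (n + 1) := by ring

end Stmt16Aux

open Stmt16Aux in
/-- Key claim in Theorem 1.5(iii): let `M` be a matching of the rooted infinite binary
tree (a set of edges, no two sharing a vertex; an edge is identified with the nonempty
binary string `v` it leads to, and joins `v.dropLast` to `v`).  Let `C₀ ≥ 1`, `C ≥ 1`,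
and let `ψ : ℕ → (0,∞)` satisfy `ψ (n+1) ≤ C ψ n` for all `n ≥ 1` and
`∑_{n ≥ 1} 1/ψ n = ∞`.  If the conductances satisfy `a e ≤ C₀` everywhere and
`a e ≤ ψ n / 2 ^ n` for every `e ∈ E n \ M`, then there is no unit flow from the root
of finite energy. -/
theorem stmt_16 (M : Set (List Bool)) (hMne : ∀ v ∈ M, v ≠ [])
    (hmatching : ∀ v ∈ M, ∀ w ∈ M, v ≠ w →
      v ≠ w.dropLast ∧ w ≠ v.dropLast ∧ v.dropLast ≠ w.dropLast)
    (C₀ C : ℝ) (hC₀ : 1 ≤ C₀) (hC : 1 ≤ C)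
    (ψ : ℕ → ℝ) (hψpos : ∀ n : ℕ, 1 ≤ n → 0 < ψ n)
    (hψgrowth : ∀ n : ℕ, 1 ≤ n → ψ (n + 1) ≤ C * ψ n)
    (hψdiv : ¬ Summable fun n : ℕ => 1 / ψ (n + 1))
    (a : List Bool → ℝ) (hapos : ∀ v : List Bool, v ≠ [] → 0 < a v)
    (haC₀ : ∀ v : List Bool, v ≠ [] → a v ≤ C₀)
    (haψ : ∀ n : ℕ, 1 ≤ n → ∀ v : List Bool, v.length = n → v ∉ M →
      a v ≤ ψ n / 2 ^ n) :
    ¬ ∃ f : List Bool → ℝ,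
        (∀ v : List Bool, v ≠ [] → f v = f (v ++ [true]) + f (v ++ [false])) ∧
        f [true] + f [false] = 1 ∧
        (∑' v : {l : List Bool // l ≠ []}, ENNReal.ofReal (f v.1 ^ 2 / a v.1)) < ⊤ := by
  classical
  rintro ⟨f, hflow, hroot, henergy⟩
  have hCpos : (0 : ℝ) < C := lt_of_lt_of_le one_pos hC
  -- flows through levels sum to 1
  have flow_sum : ∀ n : ℕ, ∑ v ∈ lvl (n + 1), f v = 1 := by
    intro n
    induction n with
    | zero =>
      rw [sum_lvl_succ 0 f]
      simp only [lvl, Finset.sum_singleton, List.nil_append]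
      exact hroot
    | succ n ih =>
      rw [sum_lvl_succ (n + 1) f]
      rw [← ih]
      exact Finset.sum_congr rfl fun v hv => by
        have hvne : v ≠ [] := by
          intro h
          have := length_of_mem_lvl (n + 1) v hv
          rw [h] at this; simp at this
        exact (hflow v hvne).symm
  -- the cutsets
  set cut : ℕ → Finset (List Bool) := fun m =>
    ((lvl m).filter (· ∉ M)) ∪
      (((lvl m).filter (· ∈ M)).biUnion fun v => {v ++ [true], v ++ [false]}) with hcut
  -- children of matched edges are unmatched
  have child_notMem : ∀ v ∈ M, ∀ b : Bool, v ++ [b] ∉ M := by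
    intro v hv b hvb
    have hne : v ≠ v ++ [b] := by
      intro h
      have := congrArg List.length h
      simp at this
    have h := (hmatching v hv (v ++ [b]) hvb hne).1
    apply h
    simp
  -- basic membership facts about the cutset
  have cut_mem : ∀ m : ℕ, 1 ≤ m → ∀ u ∈ cut m,
      u ≠ [] ∧ u ∉ M ∧ (u.length = m ∨ u.length = m + 1) := by
    intro m hm u hu
    rw [hcut, Finset.mem_union] at hu
    rcases hu with hu | hu
    · rw [Finset.mem_filter] at hu
      have hlen := length_of_mem_lvl m u hu.1
      refine ⟨?_, hu.2, Or.inl hlen⟩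
      intro h; rw [h] at hlen; simp at hlen; omega
    · rw [Finset.mem_biUnion] at hu
      obtain ⟨v, hv, huv⟩ := hu
      rw [Finset.mem_filter] at hv
      have hlenv := length_of_mem_lvl m v hv.1
      simp only [Finset.mem_insert, Finset.mem_singleton] at huv
      rcases huv with rfl | rfl
      · exact ⟨by simp, child_notMem v hv.2 true, Or.inr (by simp [hlenv])⟩
      · exact ⟨by simp, child_notMem v hv.2 false, Or.inr (by simp [hlenv])⟩
  -- the flow through each cutset is 1
  have cut_flow : ∀ n : ℕ, ∑ u ∈ cut (n + 1), f u = 1 := by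
    intro n
    have hdisj : Disjoint ((lvl (n+1)).filter (· ∉ M))
        (((lvl (n+1)).filter (· ∈ M)).biUnion fun v => {v ++ [true], v ++ [false]}) := by
      rw [Finset.disjoint_left]
      intro u hu hu'
      rw [Finset.mem_filter] at hu
      have h1 := length_of_mem_lvl (n+1) u hu.1
      rw [Finset.mem_biUnion] at hu'
      obtain ⟨v, hv, huv⟩ := hu'
      rw [Finset.mem_filter] at hv
      have h2 := length_of_mem_lvl (n+1) v hv.1
      simp only [Finset.mem_insert, Finset.mem_singleton] at huv
      rcases huv with rfl | rfl <;> simp [h2] at h1 <;> omega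
    rw [hcut]
    rw [Finset.sum_union hdisj, sum_child_biUnion]
    have : ∑ v ∈ (lvl (n+1)).filter (· ∈ M), (f (v ++ [true]) + f (v ++ [false]))
        = ∑ v ∈ (lvl (n+1)).filter (· ∈ M), f v := by
      refine Finset.sum_congr rfl fun v hv => ?_
      rw [Finset.mem_filter] at hv
      have hvne : v ≠ [] := by
        intro h
        have := length_of_mem_lvl (n+1) v hv.1
        rw [h] at this; simp at this
      exact (hflow v hvne).symm
    rw [this, add_comm, Finset.sum_filter_add_sum_filter_not]
    exact flow_sum n
  -- the total conductance of each cutset is at most (1+C) ψ m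
  have cut_cond : ∀ n : ℕ, ∑ u ∈ cut (n + 1), a u ≤ (1 + C) * ψ (n + 1) := by
    intro n
    set m := n + 1 with hm
    have hψm : 0 < ψ m := hψpos m (by omega)
    have h2m : (0:ℝ) < 2 ^ m := by positivity
    have hdisj : Disjoint ((lvl m).filter (· ∉ M))
        (((lvl m).filter (· ∈ M)).biUnion fun v => {v ++ [true], v ++ [false]}) := by
      rw [Finset.disjoint_left]
      intro u hu hu'
      rw [Finset.mem_filter] at hu
      have h1 := length_of_mem_lvl m u hu.1
      rw [Finset.mem_biUnion] at hu'
      obtain ⟨v, hv, huv⟩ := hu'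
      rw [Finset.mem_filter] at hv
      have h2 := length_of_mem_lvl m v hv.1
      simp only [Finset.mem_insert, Finset.mem_singleton] at huv
      rcases huv with rfl | rfl <;> simp [h2] at h1 <;> omega
    rw [hcut]
    rw [Finset.sum_union hdisj, sum_child_biUnion]
    have part1 : ∑ u ∈ (lvl m).filter (· ∉ M), a u ≤ ψ m := by
      have hb : ∀ u ∈ (lvl m).filter (· ∉ M), a u ≤ ψ m / 2 ^ m := by
        intro u hu
        rw [Finset.mem_filter] at hu
        exact haψ m (by omega) u (length_of_mem_lvl m u hu.1) hu.2
      calc ∑ u ∈ (lvl m).filter (· ∉ M), a u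
          ≤ ((lvl m).filter (· ∉ M)).card • (ψ m / 2 ^ m) :=
            Finset.sum_le_card_nsmul _ _ _ hb
        _ = (((lvl m).filter (· ∉ M)).card : ℝ) * (ψ m / 2 ^ m) := by
            rw [nsmul_eq_mul]
        _ ≤ (2 ^ m : ℝ) * (ψ m / 2 ^ m) := by
            apply mul_le_mul_of_nonneg_right _ (by positivity)
            have h1 : ((lvl m).filter (· ∉ M)).card ≤ (lvl m).card :=
              Finset.card_filter_le _ _
            have h2 := card_lvl_le m
            have : (((lvl m).filter (· ∉ M)).card : ℝ) ≤ ((2:ℕ) ^ m : ℕ) := by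
              exact_mod_cast le_trans h1 h2
            simpa using this
        _ = ψ m := by field_simp
    have part2 : ∑ v ∈ (lvl m).filter (· ∈ M), (a (v ++ [true]) + a (v ++ [false]))
        ≤ C * ψ m := by
      have hb : ∀ v ∈ (lvl m).filter (· ∈ M),
          a (v ++ [true]) + a (v ++ [false]) ≤ C * ψ m / 2 ^ m := by
        intro v hv
        rw [Finset.mem_filter] at hv
        have hlenv := length_of_mem_lvl m v hv.1
        have hgrow : ψ (m + 1) ≤ C * ψ m := hψgrowth m (by omega)
        have hchild : ∀ b : Bool, a (v ++ [b]) ≤ C * ψ m / 2 ^ (m + 1) := by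
          intro b
          have h1 : a (v ++ [b]) ≤ ψ (m + 1) / 2 ^ (m + 1) :=
            haψ (m + 1) (by omega) (v ++ [b]) (by simp [hlenv])
              (child_notMem v hv.2 b)
          refine h1.trans ?_
          gcongr
        have := add_le_add (hchild true) (hchild false)
        calc a (v ++ [true]) + a (v ++ [false])
            ≤ C * ψ m / 2 ^ (m + 1) + C * ψ m / 2 ^ (m + 1) := this
          _ = C * ψ m / 2 ^ m := by rw [pow_succ]; field_simp; ring
      calc ∑ v ∈ (lvl m).filter (· ∈ M), (a (v ++ [true]) + a (v ++ [false]))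
          ≤ ((lvl m).filter (· ∈ M)).card • (C * ψ m / 2 ^ m) :=
            Finset.sum_le_card_nsmul _ _ _ hb
        _ = (((lvl m).filter (· ∈ M)).card : ℝ) * (C * ψ m / 2 ^ m) := by
            rw [nsmul_eq_mul]
        _ ≤ (2 ^ m : ℝ) * (C * ψ m / 2 ^ m) := by
            apply mul_le_mul_of_nonneg_right _ (by positivity)
            have h1 : ((lvl m).filter (· ∈ M)).card ≤ (lvl m).card :=
              Finset.card_filter_le _ _
            have h2 := card_lvl_le m
            have : (((lvl m).filter (· ∈ M)).card : ℝ) ≤ ((2:ℕ) ^ m : ℕ) := by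
              exact_mod_cast le_trans h1 h2
            simpa using this
        _ = C * ψ m := by field_simp
    calc ∑ u ∈ (lvl m).filter (· ∉ M), a u
          + ∑ v ∈ (lvl m).filter (· ∈ M), (a (v ++ [true]) + a (v ++ [false]))
        ≤ ψ m + C * ψ m := add_le_add part1 part2
      _ = (1 + C) * ψ m := by ring
  -- Cauchy–Schwarz (Sedrakyan) lower bound on the energy through each cutset
  have cut_energy : ∀ n : ℕ,
      1 / ((1 + C) * ψ (n + 1)) ≤ ∑ u ∈ cut (n + 1), f u ^ 2 / a u := by
    intro n
    have hψm : 0 < ψ (n + 1) := hψpos (n + 1) (by omega)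
    have hapos' : ∀ u ∈ cut (n + 1), 0 < a u := fun u hu =>
      hapos u (cut_mem (n + 1) (by omega) u hu).1
    have hCS := Finset.sq_sum_div_le_sum_sq_div (cut (n + 1)) f hapos'
    rw [cut_flow n, one_pow] at hCS
    have hne : (cut (n + 1)).Nonempty := by
      by_contra h
      rw [Finset.not_nonempty_iff_eq_empty] at h
      have := cut_flow n
      rw [h] at this; simp at this
    have hsuma : 0 < ∑ u ∈ cut (n + 1), a u := Finset.sum_pos hapos' hne
    have h1 : 1 / ((1 + C) * ψ (n + 1)) ≤ 1 / ∑ u ∈ cut (n + 1), a u := by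
      apply one_div_le_one_div_of_le hsuma
      exact cut_cond n
    exact h1.trans hCS
  -- the cutsets at the chosen levels are pairwise disjoint; sum up the energy
  set F : {l : List Bool // l ≠ []} → ENNReal := fun v => ENNReal.ofReal (f v.1 ^ 2 / a v.1)
    with hF
  set e : (Σ n : ℕ, {v // v ∈ cut (2 * n + 2)}) → {l : List Bool // l ≠ []} := fun x =>
    ⟨x.2.1, (cut_mem (2 * x.1 + 2) (by omega) x.2.1 x.2.2).1⟩ with he
  have hinj : Function.Injective e := by
    rintro ⟨n, ⟨u, hu⟩⟩ ⟨n', ⟨u', hu'⟩⟩ h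
    simp only [he, Subtype.mk.injEq] at h
    have hlen := (cut_mem (2 * n + 2) (by omega) u hu).2.2
    have hlen' := (cut_mem (2 * n' + 2) (by omega) u' hu').2.2
    have hnn' : n = n' := by
      subst h
      rcases hlen with h1 | h1 <;> rcases hlen' with h2 | h2 <;> omega
    subst hnn'
    subst h
    rfl
  have key : ∑' n : ℕ, ENNReal.ofReal (1 / ((1 + C) * ψ (2 * n + 2)))
      ≤ ∑' v : {l : List Bool // l ≠ []}, F v := by
    calc ∑' n : ℕ, ENNReal.ofReal (1 / ((1 + C) * ψ (2 * n + 2)))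
        ≤ ∑' n : ℕ, ∑ u ∈ cut (2 * n + 2), ENNReal.ofReal (f u ^ 2 / a u) := by
          apply ENNReal.tsum_le_tsum
          intro n
          have hnn : ∀ u ∈ cut (2 * n + 2), 0 ≤ f u ^ 2 / a u := fun u hu =>
            div_nonneg (sq_nonneg _)
              (hapos u (cut_mem (2 * n + 2) (by omega) u hu).1).le
          rw [← ENNReal.ofReal_sum_of_nonneg hnn]
          apply ENNReal.ofReal_le_ofReal
          have := cut_energy (2 * n + 1)
          simpa using this
      _ = ∑' n : ℕ, ∑' u : {v // v ∈ cut (2 * n + 2)}, F (e ⟨n, u⟩) := by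
          apply tsum_congr
          intro n
          rw [tsum_fintype]
          rw [← Finset.sum_attach (cut (2 * n + 2)) (fun u => ENNReal.ofReal (f u ^ 2 / a u))]
          rfl
      _ = ∑' x : (Σ n : ℕ, {v // v ∈ cut (2 * n + 2)}), F (e x) :=
          (ENNReal.tsum_sigma' (fun x => F (e x))).symm
      _ ≤ ∑' v : {l : List Bool // l ≠ []}, F v :=
          ENNReal.tsum_comp_le_tsum_of_injective hinj F
  -- finite energy gives summability, contradicting divergence
  have hfin : (∑' n : ℕ, ENNReal.ofReal (1 / ((1 + C) * ψ (2 * n + 2)))) ≠ ⊤ :=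
    ne_top_of_le_ne_top henergy.ne key
  have hsumm : Summable fun n : ℕ => 1 / ((1 + C) * ψ (2 * n + 2)) := by
    have := ENNReal.summable_toReal hfin
    refine this.congr fun n => ?_
    have hψm : 0 < ψ (2 * n + 2) := hψpos _ (by omega)
    rw [ENNReal.toReal_ofReal (by positivity)]
  have he2 : Summable fun n : ℕ => 1 / ψ (2 * n + 2) := by
    have h := hsumm.mul_left (1 + C)
    refine h.congr fun n => ?_
    have hψm : 0 < ψ (2 * n + 2) := hψpos _ (by omega)
    have h1C : (0:ℝ) < 1 + C := by linarith
    field_simp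
  have ho2 : Summable fun n : ℕ => 1 / ψ (2 * n + 1) := by
    apply Summable.of_nonneg_of_le
      (fun n => one_div_nonneg.mpr (hψpos _ (by omega)).le)
      (fun n => ?_) (he2.mul_left C)
    have h1 : 0 < ψ (2 * n + 1) := hψpos _ (by omega)
    have h2 : 0 < ψ (2 * n + 2) := hψpos _ (by omega)
    have h3 : ψ (2 * n + 2) ≤ C * ψ (2 * n + 1) := hψgrowth (2 * n + 1) (by omega)
    calc (1:ℝ) / ψ (2 * n + 1) ≤ C / ψ (2 * n + 2) := by
          rw [div_le_div_iff₀ h1 h2]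
          linarith
      _ = C * (1 / ψ (2 * n + 2)) := by ring
  apply hψdiv
  apply Summable.even_add_odd
  · exact ho2.congr fun k => by norm_num
  · exact he2.congr fun k => by ring_nf
end
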